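/- arXiv:1707.02799 — 2 statements merged into one kernel-verified Lean document; each statement's English description precedes it below -/
import Mathlib

section
/- Suppose all the links of X of dimension ≥ 1 (including X itself) are connected (i.e., for every −1 ≤ k ≤ n−2 and τ ∈ X(k), the underlying graph of X_τ is connected). Then for every 0 ≤ k ≤ n−2: if (n−1−k)·μ_{n−1} < 1 then μ_k ≤ μ_{n−1}/(1 − (n−1−k)·μ_{n−1}); and if ν_{n−1} ≤ 0 then ν_k ≥ ν_{n−1}/(1 − (n−1−k)·ν_{n−1}). -/
/-!
Framework: a pure `n`-dimensional finite weighted simplicial complex, following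
Kaufman–Oppenheim, "High Order Random Walks: Beyond Spectral Gap".

A complex is given by its finset of faces (finsets of a vertex type `V`) together with
a weight function `m`.  We index levels by **cardinality**: `X.K c` is the set of faces
with `c` elements, i.e. the set `X(k)` of `k`-dimensional faces for `k = c - 1`
(so `X(-1) = X.K 0`, and a pure `n`-dimensional complex has top level `X.K (n+1)`).
-/

noncomputable section

open Finset

/-- The data of a weighted simplicial complex: a finite family of faces and a weight. -/
structure WSC (V : Type*) [DecidableEq V] where
  faces : Finset (Finset V)
  m : Finset V → ℝ

namespace WSC

variable {V : Type*} [DecidableEq V]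

/-- `X.IsWSC n` : `X` is a pure `n`-dimensional finite weighted simplicial complex:
the faces form a nonempty downward-closed family, every face is contained in a face with
`n+1` elements (and no face has more), the weights are positive, and the weight of every
face of cardinality `≤ n` is the sum of the weights of the faces covering it. -/
def IsWSC (X : WSC V) (n : ℕ) : Prop :=
  ∅ ∈ X.faces ∧
  (∀ ⦃σ τ : Finset V⦄, σ ∈ X.faces → τ ⊆ σ → τ ∈ X.faces) ∧
  (∀ ⦃σ⦄, σ ∈ X.faces → σ.card ≤ n + 1) ∧
  (∀ ⦃σ⦄, σ ∈ X.faces → ∃ η ∈ X.faces, σ ⊆ η ∧ η.card = n + 1) ∧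
  (∀ ⦃σ⦄, σ ∈ X.faces → 0 < X.m σ) ∧
  (∀ ⦃τ⦄, τ ∈ X.faces → τ.card ≤ n →
    X.m τ = ∑ σ ∈ X.faces.filter (fun σ => τ ⊆ σ ∧ σ.card = τ.card + 1), X.m σ)

/-- `X.K c` : the faces with `c` elements, i.e. `X(c-1)` in dimension indexing. -/
def K (X : WSC V) (c : ℕ) : Finset (Finset V) := X.faces.filter (fun σ => σ.card = c)

/-- The weighted inner product on cochains supported on the faces with `c` elements. -/
def inn (X : WSC V) (c : ℕ) (φ ψ : Finset V → ℝ) : ℝ :=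
  ∑ σ ∈ X.K c, X.m σ * (φ σ * ψ σ)

/-- The squared norm of a cochain on the faces with `c` elements. -/
def normSq (X : WSC V) (c : ℕ) (φ : Finset V → ℝ) : ℝ := X.inn c φ φ

/-- The norm of a cochain on the faces with `c` elements. -/
def norm (X : WSC V) (c : ℕ) (φ : Finset V → ℝ) : ℝ := Real.sqrt (X.normSq c φ)

/-- `X.cochainZero c φ` : φ belongs to `C^{c-1}_0 (X, ℝ)`, i.e. it is orthogonal to the
constant functions at level `c`. -/
def cochainZero (X : WSC V) (c : ℕ) (φ : Finset V → ℝ) : Prop :=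
  ∑ σ ∈ X.K c, X.m σ * φ σ = 0

/-- The signless differential, from cochains at level `c` to cochains at level `c+1`:
`(d φ)(σ) = ∑_{τ ∈ X(c-1), τ ⊂ σ} φ(τ)`. -/
def d (X : WSC V) (c : ℕ) (φ : Finset V → ℝ) : Finset V → ℝ :=
  fun σ => ∑ τ ∈ (X.K c).filter (fun τ => τ ⊆ σ), φ τ

/-- The (explicit formula for the) adjoint of the signless differential, from cochains at
level `c+1` to cochains at level `c`: `(d* ψ)(τ) = ∑_{σ ⊇ τ} (m σ / m τ) ψ(σ)`. -/
def dStar (X : WSC V) (c : ℕ) (ψ : Finset V → ℝ) : Finset V → ℝ :=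
  fun τ => ∑ σ ∈ (X.K (c + 1)).filter (fun σ => τ ⊆ σ), (X.m σ / X.m τ) * ψ σ

/-- The (lazy) upper random walk operator `M⁺` on cochains at level `c`
(i.e. on `k`-cochains for `k = c-1`; note `k + 2 = c + 1`). -/
def Mup (X : WSC V) (c : ℕ) (φ : Finset V → ℝ) : Finset V → ℝ :=
  fun τ => (1 / ((c : ℝ) + 1)) * φ τ +
    ∑ τ' ∈ (X.K c).filter (fun τ' => τ ∪ τ' ∈ X.K (c + 1)),
      (X.m (τ ∪ τ') / (((c : ℝ) + 1) * X.m τ)) * φ τ'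

/-- The lower random walk operator `M⁻` on cochains at level `c`
(i.e. on `k`-cochains for `k = c-1`; note `k + 1 = c`). -/
def Mdown (X : WSC V) (c : ℕ) (φ : Finset V → ℝ) : Finset V → ℝ :=
  fun τ => (∑ η ∈ (X.K (c - 1)).filter (fun η => η ⊆ τ), X.m τ / ((c : ℝ) * X.m η)) * φ τ +
    ∑ τ' ∈ (X.K c).filter (fun τ' => τ' ≠ τ ∧ τ ∩ τ' ∈ X.K (c - 1)),
      (X.m τ' / ((c : ℝ) * X.m (τ ∩ τ'))) * φ τ'

/-- The non-lazy upper random walk operator `(M')⁺ = ((k+2)/(k+1)) M⁺ - (1/(k+1)) I`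
on cochains at level `c = k+1`. -/
def Mup' (X : WSC V) (c : ℕ) (φ : Finset V → ℝ) : Finset V → ℝ :=
  fun τ => (((c : ℝ) + 1) / (c : ℝ)) * X.Mup c φ τ - (1 / (c : ℝ)) * φ τ

/-- The link `X_τ` of a face `τ`, with the induced weight `m_τ (η) = m (τ ∪ η)`. -/
def link (X : WSC V) (τ : Finset V) : WSC V where
  faces := X.faces.filter (fun η => η ∩ τ = ∅ ∧ τ ∪ η ∈ X.faces)
  m := fun η => X.m (τ ∪ η)

/-- The localization `φ_τ (η) = φ (τ ∪ η)` of a cochain `φ` to the link of `τ`. -/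
def localize (φ : Finset V → ℝ) (τ : Finset V) : Finset V → ℝ := fun η => φ (τ ∪ η)

/-- The underlying graph (1-skeleton) of a complex. -/
def skeleton (Y : WSC V) : SimpleGraph {v : V // ({v} : Finset V) ∈ Y.faces} where
  Adj u w := u ≠ w ∧ ({(u : V), (w : V)} : Finset V) ∈ Y.faces
  symm := by
    constructor
    intro u w h
    refine ⟨h.1.symm, ?_⟩
    rw [Finset.pair_comm]
    exact h.2
  loopless := by constructor; intro u h; exact h.1 rfl

/-- All links of `X` of dimension `≥ 1` (including `X` itself, as the link of `∅`)
have a connected underlying graph. -/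
def LinksConnected (X : WSC V) (n : ℕ) : Prop :=
  ∀ c < n, ∀ τ ∈ X.K c, (X.link τ).skeleton.Connected

/-- The second largest eigenvalue of the self-adjoint operator `(M')⁺₀` on `C⁰(Y, ℝ)`,
via its Rayleigh-quotient characterization over the orthogonal complement of the
constant functions (the top eigenfunction). -/
def secondEig (Y : WSC V) : ℝ :=
  sSup {r : ℝ | ∃ ψ : Finset V → ℝ, Y.normSq 1 ψ ≠ 0 ∧
    (∑ v ∈ Y.K 1, Y.m v * ψ v) = 0 ∧ r = Y.inn 1 (Y.Mup' 1 ψ) ψ / Y.normSq 1 ψ}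

/-- The smallest eigenvalue of the self-adjoint operator `(M')⁺₀` on `C⁰(Y, ℝ)`,
via its Rayleigh-quotient characterization. -/
def smallestEig (Y : WSC V) : ℝ :=
  sInf {r : ℝ | ∃ ψ : Finset V → ℝ, Y.normSq 1 ψ ≠ 0 ∧
    r = Y.inn 1 (Y.Mup' 1 ψ) ψ / Y.normSq 1 ψ}

/-- `μ_k = max_{τ ∈ X(k-1)} μ_τ` where `μ_τ` is the second largest eigenvalue of
`(M')⁺_{τ,0}`; faces `τ ∈ X(k-1)` have `k` elements. -/
def mu (X : WSC V) (k : ℕ) : ℝ :=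
  sSup {r : ℝ | ∃ τ ∈ X.K k, r = (X.link τ).secondEig}

/-- `ν_k = min_{τ ∈ X(k-1)} ν_τ` where `ν_τ` is the smallest eigenvalue of
`(M')⁺_{τ,0}`; faces `τ ∈ X(k-1)` have `k` elements. -/
def nu (X : WSC V) (k : ℕ) : ℝ :=
  sInf {r : ℝ | ∃ τ ∈ X.K k, r = (X.link τ).smallestEig}

/-- `X` is a one-sided `λ`-local spectral expander: `μ_k ≤ λ` for every `0 ≤ k ≤ n-1`. -/
def OneSided (X : WSC V) (n : ℕ) (lam : ℝ) : Prop := ∀ k < n, X.mu k ≤ lam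

/-- `X` is a two-sided `λ`-local spectral expander: `μ_k ≤ λ` and `ν_k ≥ -λ`
for every `0 ≤ k ≤ n-1`. -/
def TwoSided (X : WSC V) (n : ℕ) (lam : ℝ) : Prop :=
  ∀ k < n, X.mu k ≤ lam ∧ -lam ≤ X.nu k

end WSC


namespace SpecAux

variable {ι : Type*} [Fintype ι]

def ip (w x y : ι → ℝ) : ℝ := ∑ i, w i * (x i * y i)

def app (a : ι → ι → ℝ) (x : ι → ℝ) : ι → ℝ := fun i => ∑ j, a i j * x j

lemma ip_nonneg {w : ι → ℝ} (hw : ∀ i, 0 < w i) (x : ι → ℝ) : 0 ≤ ip w x x :=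
  Finset.sum_nonneg fun i _ => mul_nonneg (hw i).le (mul_self_nonneg _)

lemma ip_self_eq_zero {w : ι → ℝ} (hw : ∀ i, 0 < w i) {x : ι → ℝ}
    (h : ip w x x = 0) : x = 0 := by
  funext i
  have h0 : ∀ j ∈ Finset.univ, 0 ≤ w j * (x j * x j) :=
    fun j _ => mul_nonneg (hw j).le (mul_self_nonneg _)
  have := (Finset.sum_eq_zero_iff_of_nonneg h0).1 h i (mem_univ i)
  have hx : x i * x i = 0 := by
    rcases mul_eq_zero.1 this with h' | h'
    · exact absurd h' (hw i).ne'
    · exact h'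
  simpa using mul_self_eq_zero.1 hx

lemma ip_pos {w : ι → ℝ} (hw : ∀ i, 0 < w i) {x : ι → ℝ} (hx : ip w x x ≠ 0) :
    0 < ip w x x := lt_of_le_of_ne (ip_nonneg hw x) (Ne.symm hx)

lemma app_sym {w : ι → ℝ} {a : ι → ι → ℝ}
    (hsym : ∀ i j, w i * a i j = w j * a j i) (x y : ι → ℝ) :
    ip w (app a x) y = ip w x (app a y) := by
  unfold ip app
  have h1 : ∀ i, w i * ((∑ j, a i j * x j) * y i) = ∑ j, (w i * a i j) * (x j * y i) := by
    intro i; rw [Finset.sum_mul, Finset.mul_sum]; exact Finset.sum_congr rfl fun j _ => by ring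
  have h2 : (∑ i, w i * ((∑ j, a i j * x j) * y i))
      = ∑ i, ∑ j, (w i * a i j) * (x j * y i) :=
    Finset.sum_congr rfl fun i _ => h1 i
  rw [h2, Finset.sum_comm]
  refine Finset.sum_congr rfl fun j _ => ?_
  have h3 : w j * (x j * (∑ i, a j i * y i)) = ∑ i, (w j * a j i) * (x j * y i) := by
    simp only [Finset.mul_sum]
    exact Finset.sum_congr rfl fun i _ => by ring
  rw [h3]
  exact Finset.sum_congr rfl fun i _ => by rw [hsym i j]

lemma continuous_ip_self (w : ι → ℝ) : Continuous (fun x : ι → ℝ => ip w x x) := by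
  unfold ip
  exact continuous_finset_sum _ fun i _ =>
    continuous_const.mul ((continuous_apply i).mul (continuous_apply i))

lemma continuous_ip_right (w z : ι → ℝ) : Continuous (fun x : ι → ℝ => ip w x z) := by
  unfold ip
  exact continuous_finset_sum _ fun i _ =>
    continuous_const.mul ((continuous_apply i).mul continuous_const)

lemma continuous_f (w : ι → ℝ) (a : ι → ι → ℝ) :
    Continuous (fun x : ι → ℝ => ip w (app a x) x) := by
  unfold ip app
  exact continuous_finset_sum _ fun i _ =>
    continuous_const.mul
      ((continuous_finset_sum _ fun j _ => continuous_const.mul (continuous_apply j)).mul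
        (continuous_apply i))

lemma ip_smul_smul (w : ι → ℝ) (c : ℝ) (x y : ι → ℝ) :
    ip w (fun i => c * x i) (fun i => c * y i) = c ^ 2 * ip w x y := by
  unfold ip; rw [Finset.mul_sum]; exact Finset.sum_congr rfl fun i _ => by ring

lemma ip_smul_left (w : ι → ℝ) (c : ℝ) (x y : ι → ℝ) :
    ip w (fun i => c * x i) y = c * ip w x y := by
  unfold ip; rw [Finset.mul_sum]; exact Finset.sum_congr rfl fun i _ => by ring

lemma app_smul (a : ι → ι → ℝ) (c : ℝ) (x : ι → ℝ) :
    app a (fun i => c * x i) = fun i => c * app a x i := by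
  funext i; unfold app; rw [Finset.mul_sum]; exact Finset.sum_congr rfl fun j _ => by ring

lemma app_add (a : ι → ι → ℝ) (x y : ι → ℝ) :
    app a (fun i => x i + y i) = fun i => app a x i + app a y i := by
  funext i; unfold app; rw [← Finset.sum_add_distrib]
  exact Finset.sum_congr rfl fun j _ => by ring

lemma ip_add_left (w x y z : ι → ℝ) :
    ip w (fun i => x i + y i) z = ip w x z + ip w y z := by
  unfold ip; rw [← Finset.sum_add_distrib]
  exact Finset.sum_congr rfl fun i _ => by ring

lemma ip_add_right (w x y z : ι → ℝ) :
    ip w x (fun i => y i + z i) = ip w x y + ip w x z := by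
  unfold ip; rw [← Finset.sum_add_distrib]
  exact Finset.sum_congr rfl fun i _ => by ring

def D (w z : ι → ℝ) : Set (ι → ℝ) := {x | ip w x x = 1 ∧ ip w x z = 0}

lemma isCompact_D {w : ι → ℝ} (hw : ∀ i, 0 < w i) (z : ι → ℝ) : IsCompact (D w z) := by
  rcases isEmpty_or_nonempty ι with hι | hι
  · have he : D w z = ∅ := by
      ext x
      simp only [D, Set.mem_setOf_eq, Set.mem_empty_iff_false, iff_false, not_and]
      intro hx
      exfalso
      have : ip w x x = 0 := by unfold ip; simp
      rw [hx] at this; norm_num at this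
    rw [he]; exact isCompact_empty
  apply Metric.isCompact_of_isClosed_isBounded
  · exact (isClosed_eq (continuous_ip_self w) continuous_const).inter
      (isClosed_eq (continuous_ip_right w z) continuous_const)
  · obtain ⟨i0, -, hmin⟩ := Finset.exists_min_image Finset.univ w univ_nonempty
    set R : ℝ := Real.sqrt (1 / w i0) with hR
    have hR0 : 0 ≤ R := Real.sqrt_nonneg _
    have hsub : D w z ⊆ Metric.closedBall 0 R := by
      intro x hx
      rw [Metric.mem_closedBall, dist_zero_right]
      refine pi_norm_le_iff_of_nonneg hR0 |>.2 fun i => ?_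
      have hterm : w i * (x i * x i) ≤ 1 := by
        rw [← hx.1]
        exact Finset.single_le_sum
          (fun j _ => mul_nonneg (hw j).le (mul_self_nonneg _)) (mem_univ i)
      have hxi : x i ^ 2 ≤ 1 / w i0 := by
        rw [le_div_iff₀ (hw i0)]
        calc x i ^ 2 * w i0 ≤ x i ^ 2 * w i := by
              apply mul_le_mul_of_nonneg_left (hmin i (mem_univ i)) (sq_nonneg _)
          _ ≤ 1 := by nlinarith [hterm]
      rw [Real.norm_eq_abs, hR]
      calc |x i| = Real.sqrt (x i ^ 2) := (Real.sqrt_sq_eq_abs _).symm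
        _ ≤ Real.sqrt (1 / w i0) := Real.sqrt_le_sqrt hxi
    exact (Metric.isBounded_closedBall).subset hsub

lemma ip_sym' (w x y : ι → ℝ) : ip w x y = ip w y x := by
  unfold ip; exact Finset.sum_congr rfl fun i _ => by ring

/-- The Rayleigh set over the orthogonal complement of `z`. -/
def S (w : ι → ℝ) (a : ι → ι → ℝ) (z : ι → ℝ) : Set ℝ :=
  {r | ∃ x : ι → ℝ, ip w x x ≠ 0 ∧ ip w x z = 0 ∧ r = ip w (app a x) x / ip w x x}

lemma S_eq_image {w : ι → ℝ} (hw : ∀ i, 0 < w i) (a : ι → ι → ℝ) (z : ι → ℝ) :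
    S w a z = (fun x => ip w (app a x) x) '' D w z := by
  ext r
  constructor
  · rintro ⟨x, hx0, hxz, rfl⟩
    have hpos : 0 < ip w x x := ip_pos hw hx0
    set c : ℝ := (Real.sqrt (ip w x x))⁻¹ with hc
    have hc2 : c ^ 2 = (ip w x x)⁻¹ := by
      rw [hc, ← Real.sqrt_inv, Real.sq_sqrt (by positivity)]
    refine ⟨fun i => c * x i, ⟨?_, ?_⟩, ?_⟩
    · rw [ip_smul_smul, hc2]
      field_simp
    · rw [ip_smul_left, hxz, mul_zero]
    · show ip w (app a (fun i => c * x i)) (fun i => c * x i) = ip w (app a x) x / ip w x x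
      rw [app_smul, ip_smul_smul, hc2]
      field_simp
  · rintro ⟨x, ⟨hx1, hxz⟩, rfl⟩
    exact ⟨x, by rw [hx1]; norm_num, hxz, by rw [hx1, div_one]⟩

lemma quad_key {B C : ℝ} (h : ∀ t : ℝ, 0 ≤ 2 * t * B + t ^ 2 * C) : B = 0 := by
  by_contra hB
  have hd : (0:ℝ) < |C| + 1 := by positivity
  have h1 := h (-B / (|C| + 1))
  have hC : C ≤ |C| := le_abs_self C
  have hB2 : 0 < B ^ 2 := by positivity
  have h2 : 0 ≤ -2 * B ^ 2 * (|C| + 1) + B ^ 2 * C := by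
    have hd2 : (0:ℝ) < (|C| + 1) ^ 2 := by positivity
    have := mul_le_mul_of_nonneg_right h1 hd2.le
    calc (0:ℝ) = (2 * (-B / (|C| + 1)) * B + (-B / (|C| + 1)) ^ 2 * C) * (|C| + 1) ^ 2
            - (2 * (-B / (|C| + 1)) * B + (-B / (|C| + 1)) ^ 2 * C) * (|C| + 1) ^ 2 := by ring
      _ ≤ (2 * (-B / (|C| + 1)) * B + (-B / (|C| + 1)) ^ 2 * C) * (|C| + 1) ^ 2 := by
          simpa using this
      _ = -2 * B ^ 2 * (|C| + 1) + B ^ 2 * C := by field_simp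
  nlinarith [sq_nonneg B]

theorem exists_max_eigen {w : ι → ℝ} (hw : ∀ i, 0 < w i) {a : ι → ι → ℝ}
    (hsym : ∀ i j, w i * a i j = w j * a j i) (z : ι → ℝ)
    (hAz : ∀ x, ip w x z = 0 → ip w (app a x) z = 0)
    (hne : ∃ x, ip w x x ≠ 0 ∧ ip w x z = 0) :
    (S w a z).Nonempty ∧ BddAbove (S w a z) ∧
    ∃ ψ : ι → ℝ, ip w ψ z = 0 ∧ ip w ψ ψ = 1 ∧
      ∀ i, app a ψ i = sSup (S w a z) * ψ i := by
  have hcD : IsCompact (D w z) := isCompact_D hw z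
  have hSi : S w a z = (fun x => ip w (app a x) x) '' D w z := S_eq_image hw a z
  have hSne : (S w a z).Nonempty := by
    obtain ⟨x, hx0, hxz⟩ := hne
    exact ⟨_, x, hx0, hxz, rfl⟩
  have hcS : IsCompact (S w a z) := by
    rw [hSi]; exact hcD.image (continuous_f w a)
  have hbdd : BddAbove (S w a z) := hcS.bddAbove
  refine ⟨hSne, hbdd, ?_⟩
  set μ := sSup (S w a z) with hμ
  have hμmem : μ ∈ S w a z := hcS.sSup_mem hSne
  rw [hSi] at hμmem
  obtain ⟨ψ, ⟨hψ1, hψz⟩, hψf0⟩ := hμmem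
  have hψf : ip w (app a ψ) ψ = μ := hψf0
  refine ⟨ψ, hψz, hψ1, ?_⟩
  have hray : ∀ x : ι → ℝ, ip w x z = 0 → ip w (app a x) x ≤ μ * ip w x x := by
    intro x hxz
    rcases eq_or_ne (ip w x x) 0 with h0 | h0
    · have hx := ip_self_eq_zero hw h0
      subst hx
      have hz : app a (0 : ι → ℝ) = 0 := by funext i; unfold app; simp
      rw [hz, h0, mul_zero]
    · have hmem : ip w (app a x) x / ip w x x ∈ S w a z := ⟨x, h0, hxz, rfl⟩
      have hle := le_csSup hbdd hmem
      have hpos := ip_pos hw h0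
      rw [div_le_iff₀ hpos] at hle
      linarith [hle]
  have hkey : ∀ η : ι → ℝ, ip w η z = 0 → ip w (app a ψ) η = μ * ip w ψ η := by
    intro η hηz
    have hq : ∀ t : ℝ, 0 ≤ 2 * t * (μ * ip w ψ η - ip w (app a ψ) η)
        + t ^ 2 * (μ * ip w η η - ip w (app a η) η) := by
      intro t
      have hx := hray (fun i => ψ i + t * η i) (by
        rw [ip_add_left, ip_smul_left, hψz, hηz]; ring)
      have e1 : app a (fun i => ψ i + t * η i)
          = fun i => app a ψ i + t * app a η i := by
        rw [app_add a ψ (fun i => t * η i), app_smul]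
      rw [e1] at hx
      have e2 : ip w (fun i => app a ψ i + t * app a η i) (fun i => ψ i + t * η i)
          = ip w (app a ψ) ψ + t * ip w (app a ψ) η + t * ip w (app a η) ψ
            + t ^ 2 * ip w (app a η) η := by
        rw [ip_add_left w (app a ψ) (fun i => t * app a η i) (fun i => ψ i + t * η i)]
        rw [ip_add_right w (app a ψ) ψ (fun i => t * η i)]
        rw [ip_add_right w (fun i => t * app a η i) ψ (fun i => t * η i)]
        have hA : ip w (app a ψ) (fun i => t * η i) = t * ip w (app a ψ) η := by
          rw [ip_sym', ip_smul_left, ip_sym']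
        have hB : ip w (fun i => t * app a η i) (fun i => t * η i)
            = t ^ 2 * ip w (app a η) η := ip_smul_smul w t _ _
        have hC : ip w (fun i => t * app a η i) ψ = t * ip w (app a η) ψ :=
          ip_smul_left w t _ _
        rw [hA, hB, hC]
        ring
      have e3 : ip w (fun i => ψ i + t * η i) (fun i => ψ i + t * η i)
          = ip w ψ ψ + 2 * t * ip w ψ η + t ^ 2 * ip w η η := by
        rw [ip_add_left w ψ (fun i => t * η i) (fun i => ψ i + t * η i)]
        rw [ip_add_right w ψ ψ (fun i => t * η i)]
        rw [ip_add_right w (fun i => t * η i) ψ (fun i => t * η i)]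
        rw [ip_smul_smul]
        have h4 : ip w ψ (fun i => t * η i) = t * ip w ψ η := by
          rw [ip_sym', ip_smul_left, ip_sym']
        have h5 : ip w (fun i => t * η i) ψ = t * ip w η ψ := ip_smul_left w t _ _
        rw [h4, h5, ip_sym' w η ψ]
        ring
      rw [e2, e3] at hx
      have hsymψη : ip w (app a η) ψ = ip w (app a ψ) η := by
        rw [app_sym hsym η ψ, ip_sym' w η (app a ψ)]
      rw [hψf, hψ1, hsymψη] at hx
      nlinarith [hx]
    have := quad_key hq
    linarith [this]
  set g : ι → ℝ := fun i => app a ψ i - μ * ψ i with hg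
  have hsub : ∀ y : ι → ℝ, ip w g y = ip w (app a ψ) y - μ * ip w ψ y := by
    intro y
    unfold ip
    rw [Finset.mul_sum, ← Finset.sum_sub_distrib]
    exact Finset.sum_congr rfl fun i _ => by simp only [hg]; ring
  have hgz : ip w g z = 0 := by
    rw [hsub, hAz ψ hψz, hψz]; ring
  have hgg : ip w g g = 0 := by
    rw [hsub, hkey g hgz]; ring
  have hg0 := ip_self_eq_zero hw hgg
  intro i
  have := congrFun hg0 i
  simp only [hg, Pi.zero_apply] at this
  linarith [this]

lemma ip_zero_right (w x : ι → ℝ) : ip w x (fun _ => (0:ℝ)) = 0 := by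
  unfold ip; simp

lemma app_neg (a : ι → ι → ℝ) (x : ι → ℝ) :
    app (fun i j => -a i j) x = fun i => -app a x i := by
  funext i; unfold app; rw [← Finset.sum_neg_distrib]
  exact Finset.sum_congr rfl fun j _ => by ring

/-- Rayleigh set without constraint. -/
def T (w : ι → ℝ) (a : ι → ι → ℝ) : Set ℝ :=
  {r | ∃ x : ι → ℝ, ip w x x ≠ 0 ∧ r = ip w (app a x) x / ip w x x}

theorem exists_min_eigen {w : ι → ℝ} (hw : ∀ i, 0 < w i) {a : ι → ι → ℝ}
    (hsym : ∀ i j, w i * a i j = w j * a j i)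
    (hne : ∃ x : ι → ℝ, ip w x x ≠ 0) :
    (T w a).Nonempty ∧ BddBelow (T w a) ∧
    ∃ ψ : ι → ℝ, ip w ψ ψ = 1 ∧ ∀ i, app a ψ i = sInf (T w a) * ψ i := by
  set a' : ι → ι → ℝ := fun i j => -a i j with ha'
  have hsym' : ∀ i j, w i * a' i j = w j * a' j i := by
    intro i j; simp only [ha']; rw [mul_neg, mul_neg, hsym i j]
  have hAz : ∀ x : ι → ℝ, ip w x (fun _ => (0:ℝ)) = 0 →
      ip w (app a' x) (fun _ => (0:ℝ)) = 0 := fun x _ => ip_zero_right w _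
  have hne' : ∃ x, ip w x x ≠ 0 ∧ ip w x (fun _ => (0:ℝ)) = 0 := by
    obtain ⟨x, hx⟩ := hne; exact ⟨x, hx, ip_zero_right w x⟩
  obtain ⟨hSne, hSbdd, ψ, -, hψ1, hψeig⟩ := exists_max_eigen hw hsym' (fun _ => (0:ℝ)) hAz hne'
  have hSeq : S w a' (fun _ => (0:ℝ)) = -(T w a) := by
    ext r
    simp only [S, T, Set.mem_neg, Set.mem_setOf_eq]
    constructor
    · rintro ⟨x, hx0, -, rfl⟩
      refine ⟨x, hx0, ?_⟩
      rw [app_neg]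
      have : ip w (fun i => -app a x i) x = -ip w (app a x) x := by
        unfold ip; rw [← Finset.sum_neg_distrib]
        exact Finset.sum_congr rfl fun i _ => by ring
      rw [this]; ring
    · rintro ⟨x, hx0, hr⟩
      refine ⟨x, hx0, ip_zero_right w x, ?_⟩
      rw [app_neg]
      have : ip w (fun i => -app a x i) x = -ip w (app a x) x := by
        unfold ip; rw [← Finset.sum_neg_distrib]
        exact Finset.sum_congr rfl fun i _ => by ring
      rw [this, neg_div, ← hr, neg_neg]
  rw [hSeq] at hSne hSbdd hψeig
  have hTne : (T w a).Nonempty := Set.nonempty_neg.1 hSne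
  have hTbdd : BddBelow (T w a) := bddAbove_neg.1 hSbdd
  refine ⟨hTne, hTbdd, ψ, hψ1, fun i => ?_⟩
  have hsup : sSup (-(T w a)) = -sInf (T w a) := by rw [Real.sInf_def]; ring
  have := hψeig i
  rw [hsup] at this
  have happ : app a' ψ i = -app a ψ i := congrFun (app_neg a ψ) i
  rw [happ] at this
  linarith [this]

lemma app_one {a : ι → ι → ℝ} (hrow : ∀ i, ∑ j, a i j = 1) :
    app a (fun _ => (1:ℝ)) = fun _ => (1:ℝ) := by
  funext i
  unfold app
  simp only [mul_one]
  exact hrow i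

lemma hAz_of_row {w : ι → ℝ} {a : ι → ι → ℝ}
    (hsym : ∀ i j, w i * a i j = w j * a j i) (hrow : ∀ i, ∑ j, a i j = 1) :
    ∀ x, ip w x (fun _ => (1:ℝ)) = 0 → ip w (app a x) (fun _ => (1:ℝ)) = 0 := by
  intro x hx
  rw [app_sym hsym x (fun _ => (1:ℝ)), app_one hrow, hx]

lemma ip_sub_const_one {w : ι → ℝ} (x : ι → ℝ) (c : ℝ) :
    ip w (fun i => x i - c) (fun _ => (1:ℝ))
      = ip w x (fun _ => (1:ℝ)) - c * ip w (fun _ => (1:ℝ)) (fun _ => (1:ℝ)) := by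
  unfold ip
  rw [Finset.mul_sum, ← Finset.sum_sub_distrib]
  exact Finset.sum_congr rfl fun i _ => by ring

lemma decomp {w : ι → ℝ} {a : ι → ι → ℝ}
    (hsym : ∀ i j, w i * a i j = w j * a j i) (hrow : ∀ i, ∑ j, a i j = 1)
    (x : ι → ℝ) (c : ℝ)
    (hmean : ip w x (fun _ => (1:ℝ)) = c * ip w (fun _ => (1:ℝ)) (fun _ => (1:ℝ))) :
    ip w (fun i => x i - c) (fun _ => (1:ℝ)) = 0 ∧
    ip w x x = ip w (fun i => x i - c) (fun i => x i - c)
      + c ^ 2 * ip w (fun _ => (1:ℝ)) (fun _ => (1:ℝ)) ∧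
    ip w (app a x) x = ip w (app a (fun i => x i - c)) (fun i => x i - c)
      + c ^ 2 * ip w (fun _ => (1:ℝ)) (fun _ => (1:ℝ)) := by
  set φ : ι → ℝ := fun i => x i - c with hφ
  have hφ1 : ip w φ (fun _ => (1:ℝ)) = 0 := by
    rw [hφ, ip_sub_const_one, hmean]; ring
  have hx : x = fun i => φ i + c * (1:ℝ) := by
    funext i; simp [hφ]
  refine ⟨hφ1, ?_, ?_⟩
  · conv_lhs => rw [hx]
    rw [ip_add_left w φ (fun i => c * (1:ℝ)) (fun i => φ i + c * 1)]
    rw [ip_add_right w φ φ (fun i => c * (1:ℝ))]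
    rw [ip_add_right w (fun i => c * (1:ℝ)) φ (fun i => c * (1:ℝ))]
    have h1 : ip w φ (fun i => c * (1:ℝ)) = c * ip w φ (fun _ => (1:ℝ)) := by
      rw [ip_sym', ip_smul_left, ip_sym']
    have h2 : ip w (fun i => c * (1:ℝ)) φ = c * ip w (fun _ => (1:ℝ)) φ := ip_smul_left w c _ _
    have h3 : ip w (fun i : ι => c * (1:ℝ)) (fun i => c * (1:ℝ))
        = c ^ 2 * ip w (fun _ => (1:ℝ)) (fun _ => (1:ℝ)) := ip_smul_smul w c _ _
    rw [h1, h2, h3, hφ1, ip_sym' w (fun _ => (1:ℝ)) φ, hφ1]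
    ring
  · conv_lhs => rw [hx]
    have happ : app a (fun i => φ i + c * (1:ℝ)) = fun i => app a φ i + c * (1:ℝ) := by
      rw [app_add a φ (fun i => c * (1:ℝ)), app_smul]
      funext i
      show app a φ i + c * app a (fun _ => (1:ℝ)) i = app a φ i + c * 1
      rw [congrFun (app_one hrow) i]
    rw [happ]
    rw [ip_add_left w (app a φ) (fun i => c * (1:ℝ)) (fun i => φ i + c * 1)]
    rw [ip_add_right w (app a φ) φ (fun i => c * (1:ℝ))]
    rw [ip_add_right w (fun i => c * (1:ℝ)) φ (fun i => c * (1:ℝ))]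
    have h1 : ip w (app a φ) (fun i => c * (1:ℝ)) = c * ip w (app a φ) (fun _ => (1:ℝ)) := by
      rw [ip_sym', ip_smul_left, ip_sym']
    have h1' : ip w (app a φ) (fun _ => (1:ℝ)) = 0 := by
      rw [app_sym hsym φ (fun _ => (1:ℝ)), app_one hrow, hφ1]
    have h2 : ip w (fun i => c * (1:ℝ)) φ = c * ip w (fun _ => (1:ℝ)) φ := ip_smul_left w c _ _
    have h3 : ip w (fun i : ι => c * (1:ℝ)) (fun i => c * (1:ℝ))
        = c ^ 2 * ip w (fun _ => (1:ℝ)) (fun _ => (1:ℝ)) := ip_smul_smul w c _ _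
    rw [h1, h1', h2, h3, ip_sym' w (fun _ => (1:ℝ)) φ, hφ1]
    ring

lemma decomp_le {w : ι → ℝ} (hw : ∀ i, 0 < w i) {a : ι → ι → ℝ}
    (hsym : ∀ i j, w i * a i j = w j * a j i) (hrow : ∀ i, ∑ j, a i j = 1)
    (hbdd : BddAbove (S w a (fun _ => (1:ℝ)))) {lam : ℝ}
    (hlam : sSup (S w a (fun _ => (1:ℝ))) ≤ lam)
    (x : ι → ℝ) (c : ℝ)
    (hmean : ip w x (fun _ => (1:ℝ)) = c * ip w (fun _ => (1:ℝ)) (fun _ => (1:ℝ))) :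
    ip w (app a x) x ≤ c ^ 2 * ip w (fun _ => (1:ℝ)) (fun _ => (1:ℝ))
      + lam * (ip w x x - c ^ 2 * ip w (fun _ => (1:ℝ)) (fun _ => (1:ℝ))) ∧
    c ^ 2 * ip w (fun _ => (1:ℝ)) (fun _ => (1:ℝ)) ≤ ip w x x := by
  obtain ⟨hφ1, hxx, haxx⟩ := decomp hsym hrow x c hmean
  set φ : ι → ℝ := fun i => x i - c with hφ
  have hφnn : 0 ≤ ip w φ φ := ip_nonneg hw φ
  constructor
  · rw [haxx]
    have hb : ip w (app a φ) φ ≤ lam * ip w φ φ := by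
      rcases eq_or_ne (ip w φ φ) 0 with h0 | h0
      · have hz := ip_self_eq_zero hw h0
        have : app a φ = 0 := by rw [hz]; funext i; unfold app; simp
        rw [this, h0, mul_zero]
        unfold ip; simp
      · have hmem : ip w (app a φ) φ / ip w φ φ ∈ S w a (fun _ => (1:ℝ)) :=
          ⟨φ, h0, hφ1, rfl⟩
        have hle := (le_csSup hbdd hmem).trans hlam
        have hpos := ip_pos hw h0
        rw [div_le_iff₀ hpos] at hle
        linarith
    have : ip w φ φ = ip w x x - c ^ 2 * ip w (fun _ => (1:ℝ)) (fun _ => (1:ℝ)) := by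
      rw [hxx]; ring
    rw [← this]
    linarith
  · rw [hxx]; linarith

lemma decomp_ge {w : ι → ℝ} (hw : ∀ i, 0 < w i) {a : ι → ι → ℝ}
    (hsym : ∀ i j, w i * a i j = w j * a j i) (hrow : ∀ i, ∑ j, a i j = 1)
    (hbdd : BddBelow (T w a)) {nu' : ℝ} (hnu : nu' ≤ sInf (T w a))
    (x : ι → ℝ) (c : ℝ)
    (hmean : ip w x (fun _ => (1:ℝ)) = c * ip w (fun _ => (1:ℝ)) (fun _ => (1:ℝ))) :
    c ^ 2 * ip w (fun _ => (1:ℝ)) (fun _ => (1:ℝ))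
      + nu' * (ip w x x - c ^ 2 * ip w (fun _ => (1:ℝ)) (fun _ => (1:ℝ)))
      ≤ ip w (app a x) x ∧
    c ^ 2 * ip w (fun _ => (1:ℝ)) (fun _ => (1:ℝ)) ≤ ip w x x := by
  obtain ⟨hφ1, hxx, haxx⟩ := decomp hsym hrow x c hmean
  set φ : ι → ℝ := fun i => x i - c with hφ
  have hφnn : 0 ≤ ip w φ φ := ip_nonneg hw φ
  constructor
  · rw [haxx]
    have hb : nu' * ip w φ φ ≤ ip w (app a φ) φ := by
      rcases eq_or_ne (ip w φ φ) 0 with h0 | h0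
      · have hz := ip_self_eq_zero hw h0
        have : app a φ = 0 := by rw [hz]; funext i; unfold app; simp
        rw [this, h0, mul_zero]
        unfold ip; simp
      · have hmem : ip w (app a φ) φ / ip w φ φ ∈ T w a := ⟨φ, h0, rfl⟩
        have hle := hnu.trans (csInf_le hbdd hmem)
        have hpos := ip_pos hw h0
        rw [le_div_iff₀ hpos] at hle
        linarith
    have : ip w φ φ = ip w x x - c ^ 2 * ip w (fun _ => (1:ℝ)) (fun _ => (1:ℝ)) := by
      rw [hxx]; ring
    rw [← this]
    linarith
  · rw [hxx]; linarith

end SpecAux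
namespace WSCAux

open WSC SpecAux

variable {V : Type*} [DecidableEq V]

lemma mem_K {X : WSC V} {c : ℕ} {σ : Finset V} :
    σ ∈ X.K c ↔ σ ∈ X.faces ∧ σ.card = c := Finset.mem_filter

lemma K_subset_faces {X : WSC V} {c : ℕ} : X.K c ⊆ X.faces :=
  fun _ h => (mem_K.1 h).1

lemma m_pos_K {X : WSC V} {n : ℕ} (hX : X.IsWSC n) {c : ℕ} {σ : Finset V}
    (h : σ ∈ X.K c) : 0 < X.m σ := hX.2.2.2.2.1 (K_subset_faces h)

lemma K_nonempty {X : WSC V} {n : ℕ} (hX : X.IsWSC n) {c : ℕ} (hc : c ≤ n + 1) :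
    (X.K c).Nonempty := by
  obtain ⟨η, hη, -, hcard⟩ := hX.2.2.2.1 hX.1
  obtain ⟨σ, hσsub, hσcard⟩ := Finset.exists_subset_card_eq (hcard ▸ hc : c ≤ η.card)
  exact ⟨σ, mem_K.2 ⟨hX.2.1 hη hσsub, hσcard⟩⟩

lemma mem_link_faces {X : WSC V} {τ η : Finset V} :
    η ∈ (X.link τ).faces ↔ η ∈ X.faces ∧ η ∩ τ = ∅ ∧ τ ∪ η ∈ X.faces := by
  simp [WSC.link, Finset.mem_filter]

/-- The link of a face of cardinality `c` is a pure `(n-c)`-dimensional WSC. -/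
lemma link_isWSC {X : WSC V} {n : ℕ} (hX : X.IsWSC n) {c : ℕ} {τ : Finset V}
    (hτ : τ ∈ X.faces) (hcard : τ.card = c) (hc : c ≤ n) :
    (X.link τ).IsWSC (n - c) := by
  obtain ⟨hemp, hdown, hcardle, hpure, hpos, hrec⟩ := hX
  have hdisj : ∀ {η : Finset V}, η ∩ τ = ∅ → (τ ∪ η).card = c + η.card := by
    intro η hd
    rw [Finset.card_union_of_disjoint, hcard]
    rw [Finset.disjoint_iff_inter_eq_empty, Finset.inter_comm]
    exact hd
  refine ⟨?_, ?_, ?_, ?_, ?_, ?_⟩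
  · exact mem_link_faces.2 ⟨hemp, Finset.empty_inter τ, by rwa [Finset.union_empty]⟩
  · intro σ η hσ hsub
    obtain ⟨h1, h2, h3⟩ := mem_link_faces.1 hσ
    refine mem_link_faces.2 ⟨hdown h1 hsub, ?_, ?_⟩
    · apply Finset.eq_empty_of_forall_notMem
      intro x hx
      rw [Finset.mem_inter] at hx
      have : x ∈ σ ∩ τ := Finset.mem_inter.2 ⟨hsub hx.1, hx.2⟩
      rw [h2] at this
      exact absurd this (Finset.notMem_empty x)
    · exact hdown h3 (Finset.union_subset_union_right hsub)
  · intro η hη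
    obtain ⟨h1, h2, h3⟩ := mem_link_faces.1 hη
    have := hcardle h3
    rw [hdisj h2] at this
    omega
  · intro η hη
    obtain ⟨h1, h2, h3⟩ := mem_link_faces.1 hη
    obtain ⟨σ, hσ, hsub, hσcard⟩ := hpure h3
    refine ⟨σ \ τ, mem_link_faces.2 ⟨hdown hσ (Finset.sdiff_subset), ?_, ?_⟩, ?_, ?_⟩
    · rw [Finset.inter_comm]; exact Finset.inter_sdiff_self τ σ
    · rwa [Finset.union_sdiff_self_eq_union, Finset.union_eq_right.2
        ((Finset.union_subset_iff.1 hsub).1)]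
    · intro x hx
      rw [Finset.mem_sdiff]
      refine ⟨hsub (Finset.mem_union_right τ hx), fun hxτ => ?_⟩
      have : x ∈ η ∩ τ := Finset.mem_inter.2 ⟨hx, hxτ⟩
      rw [h2] at this
      exact absurd this (Finset.notMem_empty x)
    · rw [Finset.card_sdiff_of_subset ((Finset.union_subset_iff.1 hsub).1), hσcard, hcard]
      omega
  · intro η hη
    exact hpos (mem_link_faces.1 hη).2.2
  · intro η hη hcle
    obtain ⟨h1, h2, h3⟩ := mem_link_faces.1 hη
    show X.m (τ ∪ η) = _
    have hcards : (τ ∪ η).card = c + η.card := hdisj h2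
    have hrecτη := hrec h3 (by omega)
    rw [hrecτη]
    apply Finset.sum_nbij' (fun σ => σ \ τ) (fun η' => τ ∪ η')
    · intro σ hσ
      rw [Finset.mem_filter] at hσ
      obtain ⟨hσf, hsubσ, hσc⟩ := hσ
      have hτσ : τ ⊆ σ := (Finset.union_subset_iff.1 hsubσ).1
      have hησ : η ⊆ σ \ τ := by
        intro x hx
        rw [Finset.mem_sdiff]
        refine ⟨hsubσ (Finset.mem_union_right τ hx), fun hxτ => ?_⟩
        have : x ∈ η ∩ τ := Finset.mem_inter.2 ⟨hx, hxτ⟩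
        rw [h2] at this
        exact absurd this (Finset.notMem_empty x)
      rw [Finset.mem_filter]
      refine ⟨mem_link_faces.2 ⟨hdown hσf Finset.sdiff_subset, by rw [Finset.inter_comm]; exact Finset.inter_sdiff_self τ σ, ?_⟩,
        hησ, ?_⟩
      · rwa [Finset.union_sdiff_self_eq_union, Finset.union_eq_right.2 hτσ]
      · rw [Finset.card_sdiff_of_subset hτσ, hσc, hcards, hcard]
        omega
    · intro η' hη'
      rw [Finset.mem_filter] at hη'
      obtain ⟨hη'f, hsubη', hη'c⟩ := hη'
      obtain ⟨g1, g2, g3⟩ := mem_link_faces.1 hη'f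
      rw [Finset.mem_filter]
      refine ⟨g3, Finset.union_subset_union_right hsubη', ?_⟩
      rw [hdisj g2, hη'c, hcards]
      omega
    · intro σ hσ
      rw [Finset.mem_filter] at hσ
      exact Finset.union_sdiff_of_subset (Finset.union_subset_iff.1 hσ.2.1).1
    · intro η' hη'
      rw [Finset.mem_filter] at hη'
      obtain ⟨g1, g2, g3⟩ := mem_link_faces.1 hη'.1
      rw [Finset.union_comm, Finset.union_sdiff_self]
      exact Finset.sdiff_eq_self_of_disjoint
        (Finset.disjoint_iff_inter_eq_empty.2 g2)
    · intro σ hσ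
      rw [Finset.mem_filter] at hσ
      show X.m σ = X.m (τ ∪ (σ \ τ))
      rw [Finset.union_sdiff_of_subset (Finset.union_subset_iff.1 hσ.2.1).1]

end WSCAux
namespace WSCAux2
open WSC SpecAux WSCAux

variable {V : Type*} [DecidableEq V]

lemma wsc_ext {A B : WSC V} (h1 : A.faces = B.faces) (h2 : A.m = B.m) : A = B := by
  cases A; cases B; simp_all

lemma inter_union_empty_left {s t u : Finset V} (h : s ∩ (t ∪ u) = ∅) : s ∩ t = ∅ := by
  rw [← Finset.disjoint_iff_inter_eq_empty] at h ⊢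
  exact h.mono_right Finset.subset_union_left

lemma inter_union_empty_right {s t u : Finset V} (h : s ∩ (t ∪ u) = ∅) : s ∩ u = ∅ := by
  rw [← Finset.disjoint_iff_inter_eq_empty] at h ⊢
  exact h.mono_right Finset.subset_union_right

lemma link_link {X : WSC V} {n : ℕ} (hX : X.IsWSC n) {τ η : Finset V}
    (hη : η ∈ (X.link τ).faces) :
    (X.link τ).link η = X.link (τ ∪ η) := by
  obtain ⟨hη1, hη2, hη3⟩ := mem_link_faces.1 hη
  apply wsc_ext
  · ext σ
    rw [mem_link_faces, mem_link_faces, mem_link_faces, mem_link_faces]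
    constructor
    · rintro ⟨⟨s1, s2, s3⟩, s4, s5, s6, s7⟩
      refine ⟨s1, ?_, ?_⟩
      · rw [Finset.inter_union_distrib_left, s2, s4, Finset.union_empty]
      · rwa [Finset.union_assoc]
    · rintro ⟨s1, s2, s3⟩
      have hστ : σ ∩ τ = ∅ := inter_union_empty_left s2
      have hση : σ ∩ η = ∅ := inter_union_empty_right s2
      have hdown := hX.2.1
      refine ⟨⟨s1, hστ, hdown s3 ?_⟩, hση, ⟨hdown s3 ?_, ?_, ?_⟩⟩
      · intro x hx
        rcases Finset.mem_union.1 hx with h | h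
        · exact Finset.mem_union_left _ (Finset.mem_union_left _ h)
        · exact Finset.mem_union_right _ h
      · intro x hx
        rcases Finset.mem_union.1 hx with h | h
        · exact Finset.mem_union_left _ (Finset.mem_union_right _ h)
        · exact Finset.mem_union_right _ h
      · rw [Finset.union_inter_distrib_right, hη2, hστ, Finset.union_empty]
      · rwa [← Finset.union_assoc]
  · funext ρ
    show X.m (τ ∪ (η ∪ ρ)) = X.m ((τ ∪ η) ∪ ρ)
    rw [Finset.union_assoc]

lemma deg_cover {X : WSC V} {n : ℕ} (hX : X.IsWSC n) {c : ℕ} (hc : c ≤ n)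
    {σ : Finset V} (hσ : σ ∈ X.K c) :
    ∑ v ∈ X.K 1, (if v ∩ σ = ∅ ∧ v ∪ σ ∈ X.faces then X.m (v ∪ σ) else 0) = X.m σ := by
  obtain ⟨hσf, hσc⟩ := mem_K.1 hσ
  have hdown := hX.2.1
  rw [← Finset.sum_filter]
  rw [hX.2.2.2.2.2 hσf (by omega)]
  symm
  apply Finset.sum_nbij' (fun σ' => σ' \ σ) (fun v => v ∪ σ)
  · intro σ' hσ'
    rw [Finset.mem_filter] at hσ'
    obtain ⟨h1, h2, h3⟩ := hσ'
    rw [Finset.mem_filter, mem_K]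
    refine ⟨⟨hdown h1 Finset.sdiff_subset, ?_⟩, ?_, ?_⟩
    · rw [Finset.card_sdiff_of_subset h2, h3]; omega
    · rw [Finset.inter_comm]; exact Finset.inter_sdiff_self σ σ'
    · rwa [Finset.sdiff_union_of_subset h2]
  · intro v hv
    rw [Finset.mem_filter, mem_K] at hv
    obtain ⟨⟨h1, h2⟩, h3, h4⟩ := hv
    rw [Finset.mem_filter]
    refine ⟨h4, Finset.subset_union_right, ?_⟩
    rw [Finset.card_union_of_disjoint (Finset.disjoint_iff_inter_eq_empty.2 h3), h2, hσc]
    omega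
  · intro σ' hσ'
    rw [Finset.mem_filter] at hσ'
    exact Finset.sdiff_union_of_subset hσ'.2.1
  · intro v hv
    rw [Finset.mem_filter, mem_K] at hv
    exact Finset.union_sdiff_cancel_right (Finset.disjoint_iff_inter_eq_empty.2 hv.2.1)
  · intro σ' hσ'
    rw [Finset.mem_filter] at hσ'
    rw [Finset.sdiff_union_of_subset hσ'.2.1]

lemma sum_K1_weight {X : WSC V} {n : ℕ} (hX : X.IsWSC n) :
    ∑ u ∈ X.K 1, X.m u = X.m ∅ := by
  rw [hX.2.2.2.2.2 hX.1 (Nat.zero_le n)]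
  apply Finset.sum_congr
  · unfold WSC.K
    apply Finset.filter_congr
    intro σ _
    simp
  · intro _ _; rfl

/-- weight of an edge between two vertices, or 0. -/
def ew (X : WSC V) (σ σ' : Finset V) : ℝ :=
  if σ ∪ σ' ∈ X.K 2 then X.m (σ ∪ σ') else 0

lemma ew_comm (X : WSC V) (σ σ' : Finset V) : ew X σ σ' = ew X σ' σ := by
  unfold ew; rw [Finset.union_comm]

lemma ew_nonneg {X : WSC V} {n : ℕ} (hX : X.IsWSC n) (σ σ' : Finset V) :
    0 ≤ ew X σ σ' := by
  unfold ew
  split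
  · exact (m_pos_K hX (by assumption)).le
  · exact le_refl _

lemma edge_mem_iff {X : WSC V} {σ v : Finset V}
    (hσ : σ ∈ X.K 1) (hv : v ∈ X.K 1) :
    v ∪ σ ∈ X.K 2 ↔ (v ∩ σ = ∅ ∧ v ∪ σ ∈ X.faces) := by
  rw [mem_K]
  obtain ⟨-, hσc⟩ := mem_K.1 hσ
  obtain ⟨-, hvc⟩ := mem_K.1 hv
  constructor
  · rintro ⟨h1, h2⟩
    refine ⟨?_, h1⟩
    have := Finset.card_inter_add_card_union v σ
    rw [h2, hσc, hvc] at this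
    exact Finset.card_eq_zero.1 (by omega)
  · rintro ⟨h1, h2⟩
    refine ⟨h2, ?_⟩
    rw [Finset.card_union_of_disjoint (Finset.disjoint_iff_inter_eq_empty.2 h1), hσc, hvc]

lemma deg1 {X : WSC V} {n : ℕ} (hX : X.IsWSC n) (hn : 1 ≤ n) {σ : Finset V}
    (hσ : σ ∈ X.K 1) :
    ∑ σ' ∈ X.K 1, ew X σ σ' = X.m σ := by
  rw [← deg_cover hX hn hσ]
  apply Finset.sum_congr rfl
  intro v hv
  unfold ew
  rw [Finset.union_comm σ v]
  exact if_congr (edge_mem_iff hσ hv) rfl rfl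

lemma Mup'_one_apply (X : WSC V) (f : Finset V → ℝ) (σ : Finset V) :
    X.Mup' 1 f σ = ∑ σ' ∈ X.K 1, (ew X σ σ' / X.m σ) * f σ' := by
  have h1 : ∑ σ' ∈ X.K 1, (ew X σ σ' / X.m σ) * f σ'
      = ∑ σ' ∈ (X.K 1).filter (fun τ' => σ ∪ τ' ∈ X.K 2),
          (X.m (σ ∪ σ') / ((1 + 1) * X.m σ) * f σ') * 2 := by
    rw [Finset.sum_filter]
    refine Finset.sum_congr rfl fun σ' _ => ?_
    unfold ew
    split
    · rcases eq_or_ne (X.m σ) 0 with h | h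
      · simp [h]
      · field_simp
        ring
    · simp
  rw [h1]
  unfold WSC.Mup' WSC.Mup
  push_cast
  rw [← Finset.sum_mul]
  ring

end WSCAux2
namespace WSCAux3
open WSC SpecAux WSCAux WSCAux2

variable {V : Type*} [DecidableEq V]

/-- weights on vertices, as a function on the subtype. -/
def wv (Y : WSC V) : ↥(Y.K 1) → ℝ := fun u => Y.m ↑u

/-- the non-lazy upper walk matrix on vertices. -/
def av (Y : WSC V) : ↥(Y.K 1) → ↥(Y.K 1) → ℝ := fun u v => ew Y ↑u ↑v / Y.m ↑u

variable {Y : WSC V} {d : ℕ}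

lemma wv_pos (hY : Y.IsWSC d) : ∀ u, 0 < wv Y u := fun u => m_pos_K hY u.2

lemma av_sym (hY : Y.IsWSC d) : ∀ u v, wv Y u * av Y u v = wv Y v * av Y v u := by
  intro u v
  unfold wv av
  rw [mul_div_cancel₀ _ (m_pos_K hY u.2).ne', mul_div_cancel₀ _ (m_pos_K hY v.2).ne']
  exact ew_comm Y _ _

lemma av_row (hY : Y.IsWSC d) (hd : 1 ≤ d) (u : ↥(Y.K 1)) :
    ∑ v, av Y u v = 1 := by
  unfold av
  rw [← Finset.sum_div]
  rw [Finset.sum_coe_sort (Y.K 1) (fun σ' => ew Y ↑u σ')]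
  rw [deg1 hY hd u.2]
  exact div_self (m_pos_K hY u.2).ne'

lemma RQ1 (Y : WSC V) (ψ : Finset V → ℝ) :
    Y.normSq 1 ψ = ip (wv Y) (fun u => ψ ↑u) (fun u => ψ ↑u) := by
  unfold WSC.normSq WSC.inn ip wv
  rw [Finset.sum_coe_sort (Y.K 1) (fun σ => Y.m σ * (ψ σ * ψ σ))]

lemma RQ2 (Y : WSC V) (ψ : Finset V → ℝ) :
    (∑ σ ∈ Y.K 1, Y.m σ * ψ σ) = ip (wv Y) (fun u => ψ ↑u) (fun _ => (1:ℝ)) := by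
  unfold ip wv
  rw [Finset.sum_coe_sort (Y.K 1) (fun σ => Y.m σ * (ψ σ * 1))]
  exact Finset.sum_congr rfl fun σ _ => by ring

lemma RQ3 (Y : WSC V) (ψ : Finset V → ℝ) :
    Y.inn 1 (Y.Mup' 1 ψ) ψ = ip (wv Y) (app (av Y) (fun u => ψ ↑u)) (fun u => ψ ↑u) := by
  unfold WSC.inn ip wv app av
  rw [← Finset.sum_coe_sort (Y.K 1) (fun σ => Y.m σ * (Y.Mup' 1 ψ σ * ψ σ))]
  refine Finset.sum_congr rfl fun u _ => ?_
  have h1 : Y.Mup' 1 ψ ↑u = ∑ j : ↥(Y.K 1), ew Y ↑u ↑j / Y.m ↑u * ψ ↑j := by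
    rw [Mup'_one_apply]
    rw [← Finset.sum_coe_sort (Y.K 1) (fun σ' => (ew Y ↑u σ' / Y.m ↑u) * ψ σ')]
  rw [h1]

/-- extension of a vertex function by zero. -/
def ext (Y : WSC V) (x : ↥(Y.K 1) → ℝ) : Finset V → ℝ :=
  fun σ => if h : σ ∈ Y.K 1 then x ⟨σ, h⟩ else 0

lemma ext_restrict (Y : WSC V) (x : ↥(Y.K 1) → ℝ) :
    (fun u : ↥(Y.K 1) => ext Y x ↑u) = x := by
  funext u
  unfold ext
  rw [dif_pos u.2]

lemma secondEig_set_eq (Y : WSC V) :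
    {r : ℝ | ∃ ψ : Finset V → ℝ, Y.normSq 1 ψ ≠ 0 ∧
      (∑ v ∈ Y.K 1, Y.m v * ψ v) = 0 ∧ r = Y.inn 1 (Y.Mup' 1 ψ) ψ / Y.normSq 1 ψ}
    = S (wv Y) (av Y) (fun _ => (1:ℝ)) := by
  ext r
  constructor
  · rintro ⟨ψ, h1, h2, rfl⟩
    refine ⟨fun u => ψ ↑u, ?_, ?_, ?_⟩
    · rw [← RQ1]; exact h1
    · rw [← RQ2]; exact h2
    · rw [← RQ1, ← RQ3]
  · rintro ⟨x, h1, h2, rfl⟩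
    refine ⟨ext Y x, ?_, ?_, ?_⟩
    · rw [RQ1, ext_restrict]; exact h1
    · rw [RQ2, ext_restrict]; exact h2
    · rw [RQ1, RQ3, ext_restrict]

lemma secondEig_eq (Y : WSC V) :
    Y.secondEig = sSup (S (wv Y) (av Y) (fun _ => (1:ℝ))) := by
  unfold WSC.secondEig
  rw [secondEig_set_eq]

lemma smallestEig_set_eq (Y : WSC V) :
    {r : ℝ | ∃ ψ : Finset V → ℝ, Y.normSq 1 ψ ≠ 0 ∧
      r = Y.inn 1 (Y.Mup' 1 ψ) ψ / Y.normSq 1 ψ}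
    = T (wv Y) (av Y) := by
  ext r
  constructor
  · rintro ⟨ψ, h1, rfl⟩
    refine ⟨fun u => ψ ↑u, ?_, ?_⟩
    · rw [← RQ1]; exact h1
    · rw [← RQ1, ← RQ3]
  · rintro ⟨x, h1, rfl⟩
    refine ⟨ext Y x, ?_, ?_⟩
    · rw [RQ1, ext_restrict]; exact h1
    · rw [RQ1, RQ3, ext_restrict]

lemma smallestEig_eq (Y : WSC V) :
    Y.smallestEig = sInf (T (wv Y) (av Y)) := by
  unfold WSC.smallestEig
  rw [smallestEig_set_eq]

end WSCAux3
namespace WSCAux4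
open WSC SpecAux WSCAux WSCAux2 WSCAux3

variable {V : Type*} [DecidableEq V]

lemma normSq_one (W : WSC V) (f : Finset V → ℝ) :
    W.normSq 1 f = ∑ σ ∈ W.K 1, W.m σ * (f σ * f σ) := rfl

lemma inn_Mup'_one {W : WSC V} {e : ℕ} (hW : W.IsWSC e) (f g : Finset V → ℝ) :
    W.inn 1 (W.Mup' 1 f) g = ∑ σ ∈ W.K 1, ∑ σ' ∈ W.K 1, ew W σ σ' * (f σ' * g σ) := by
  unfold WSC.inn
  refine Finset.sum_congr rfl fun σ hσ => ?_
  rw [Mup'_one_apply, Finset.sum_mul, Finset.mul_sum]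
  refine Finset.sum_congr rfl fun σ' _ => ?_
  have hm : W.m σ ≠ 0 := (m_pos_K hW hσ).ne'
  field_simp

/-- vertices of a link, as a filter of the ambient vertices. -/
lemma link_K1_eq {Y : WSC V} {v : Finset V} (hv : v ∈ Y.K 1) :
    (Y.link v).K 1 = (Y.K 1).filter (fun η => v ∪ η ∈ Y.K 2) := by
  obtain ⟨hvf, hvc⟩ := mem_K.1 hv
  ext η
  rw [mem_K, Finset.mem_filter, mem_K, mem_link_faces]
  constructor
  · rintro ⟨⟨h1, h2, h3⟩, h4⟩
    refine ⟨⟨h1, h4⟩, mem_K.2 ⟨h3, ?_⟩⟩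
    rw [Finset.card_union_of_disjoint, hvc, h4]
    rw [Finset.disjoint_iff_inter_eq_empty, Finset.inter_comm]
    exact h2
  · rintro ⟨⟨h1, h2⟩, h3⟩
    obtain ⟨h4, h5⟩ := mem_K.1 h3
    have hd : η ∩ v = ∅ := by
      have := Finset.card_inter_add_card_union v η
      rw [h5, hvc, h2] at this
      rw [Finset.inter_comm]
      exact Finset.card_eq_zero.1 (by omega)
    exact ⟨⟨h1, hd, h4⟩, h2⟩

lemma link_m_eq (Y : WSC V) (v η : Finset V) : (Y.link v).m η = Y.m (v ∪ η) := rfl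

lemma link_m_empty (Y : WSC V) (v : Finset V) : (Y.link v).m ∅ = Y.m v := by
  rw [link_m_eq, Finset.union_empty]

/-- triangle double-counting: summing link-edge weights over the apex vertex. -/
lemma tri_sum {Y : WSC V} {d : ℕ} (hY : Y.IsWSC d) (hd : 2 ≤ d) {η η' : Finset V}
    (hη : η ∈ Y.K 1) (hη' : η' ∈ Y.K 1) :
    ∑ v ∈ Y.K 1, ew (Y.link v) η η' = ew Y η η' := by
  by_cases hK2 : η ∪ η' ∈ Y.K 2
  · unfold ew
    rw [if_pos hK2]
    rw [← deg_cover hY hd hK2]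
    refine Finset.sum_congr rfl fun v hv => ?_
    show (if η ∪ η' ∈ (Y.link v).K 2 then Y.m (v ∪ (η ∪ η')) else 0) = _
    refine if_congr ?_ rfl rfl
    obtain ⟨hf2, hc2⟩ := mem_K.1 hK2
    rw [mem_K, mem_link_faces]
    constructor
    · rintro ⟨⟨h1, h2, h3⟩, -⟩
      exact ⟨by rw [Finset.inter_comm]; exact h2, h3⟩
    · rintro ⟨h1, h2⟩
      exact ⟨⟨hf2, by rw [Finset.inter_comm]; exact h1, h2⟩, hc2⟩
  · unfold ew
    rw [if_neg hK2]
    refine Finset.sum_eq_zero fun v hv => ?_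
    show (if η ∪ η' ∈ (Y.link v).K 2 then Y.m (v ∪ (η ∪ η')) else 0) = 0
    rw [if_neg]
    intro hmem
    obtain ⟨h1, h2⟩ := mem_K.1 hmem
    exact hK2 (mem_K.2 ⟨(mem_link_faces.1 h1).1, h2⟩)

/-- link edge weights vanish if an endpoint is not a link vertex. -/
lemma link_ew_eq_zero {Y : WSC V} {d : ℕ} (hY : Y.IsWSC d) (hd : 1 ≤ d) {v : Finset V}
    (hv : v ∈ Y.K 1) {η η' : Finset V} (hη : η ∈ Y.K 1) (hη' : η' ∈ Y.K 1)
    (h : η ∉ (Y.link v).K 1 ∨ η' ∉ (Y.link v).K 1) :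
    ew (Y.link v) η η' = 0 := by
  unfold ew
  rw [if_neg]
  intro hmem
  obtain ⟨hvf, hvc⟩ := mem_K.1 hv
  have hZ : (Y.link v).IsWSC (d - 1) := link_isWSC hY hvf hvc hd
  obtain ⟨hf, hc⟩ := mem_K.1 hmem
  rcases h with h | h
  · exact h (mem_K.2 ⟨hZ.2.1 hf Finset.subset_union_left, (mem_K.1 hη).2⟩)
  · exact h (mem_K.2 ⟨hZ.2.1 hf Finset.subset_union_right, (mem_K.1 hη').2⟩)

lemma exists_ne_vertex {W : WSC V} {e : ℕ} (hW : W.IsWSC e) (he : 1 ≤ e) :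
    ∃ u₀ u₁ : ↥(W.K 1), u₀ ≠ u₁ := by
  obtain ⟨σ, hσ⟩ := K_nonempty hW (show 2 ≤ e + 1 by omega)
  obtain ⟨hσf, hσc⟩ := mem_K.1 hσ
  obtain ⟨p, q, hpq, rfl⟩ := Finset.card_eq_two.1 hσc
  have hp : ({p} : Finset V) ∈ W.K 1 := mem_K.2
    ⟨hW.2.1 hσf (Finset.singleton_subset_iff.2 (Finset.mem_insert_self p {q})),
     Finset.card_singleton p⟩
  have hq : ({q} : Finset V) ∈ W.K 1 := mem_K.2
    ⟨hW.2.1 hσf (Finset.singleton_subset_iff.2 (by simp)), Finset.card_singleton q⟩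
  refine ⟨⟨{p}, hp⟩, ⟨{q}, hq⟩, ?_⟩
  intro h
  exact hpq (Finset.singleton_injective (congrArg Subtype.val h))

lemma hne_one {W : WSC V} {e : ℕ} (hW : W.IsWSC e) (he : 1 ≤ e) :
    ∃ x : ↥(W.K 1) → ℝ, ip (wv W) x x ≠ 0 ∧ ip (wv W) x (fun _ => (1:ℝ)) = 0 := by
  obtain ⟨u₀, u₁, hne⟩ := exists_ne_vertex hW he
  set x : ↥(W.K 1) → ℝ :=
    fun u => if u = u₀ then wv W u₁ else if u = u₁ then -(wv W u₀) else 0 with hx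
  have hx0 : x u₀ = wv W u₁ := by rw [hx]; simp
  have hx1 : x u₁ = -(wv W u₀) := by rw [hx]; simp [Ne.symm hne]
  have key : ∀ y : ↥(W.K 1) → ℝ,
      ip (wv W) x y = wv W u₀ * (wv W u₁ * y u₀) + wv W u₁ * (-(wv W u₀) * y u₁) := by
    intro y
    unfold ip
    rw [← Finset.sum_subset (Finset.subset_univ ({u₀, u₁} : Finset ↥(W.K 1)))]
    · rw [Finset.sum_pair hne, hx0, hx1]
    · intro i _ hi
      rw [Finset.mem_insert, Finset.mem_singleton] at hi
      push_neg at hi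
      have : x i = 0 := by rw [hx]; simp [hi.1, hi.2]
      rw [this]; ring
  have hw0 := wv_pos hW u₀
  have hw1 := wv_pos hW u₁
  refine ⟨x, ?_, ?_⟩
  · rw [key x, hx0, hx1]
    nlinarith [mul_pos (mul_pos hw0 hw1) (add_pos hw1 hw0)]
  · rw [key (fun _ => (1:ℝ))]
    ring

lemma ip_one_one {W : WSC V} {e : ℕ} (hW : W.IsWSC e) :
    ip (wv W) (fun _ => (1:ℝ)) (fun _ => (1:ℝ)) = W.m ∅ := by
  unfold ip wv
  have h1 : ∀ u : ↥(W.K 1), W.m ↑u * ((1:ℝ) * 1) = W.m ↑u := fun u => by ring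
  rw [Finset.sum_congr rfl fun u _ => h1 u]
  rw [Finset.sum_coe_sort (W.K 1) (fun σ => W.m σ)]
  exact sum_K1_weight hW

lemma per_vertex_le {W : WSC V} {e : ℕ} (hW : W.IsWSC e) (he : 1 ≤ e) {lam : ℝ}
    (hsec : W.secondEig ≤ lam) (F : Finset V → ℝ) (c : ℝ)
    (hmean : ∑ η ∈ W.K 1, W.m η * F η = c * W.m ∅) :
    W.inn 1 (W.Mup' 1 F) F ≤ c ^ 2 * W.m ∅ + lam * (W.normSq 1 F - c ^ 2 * W.m ∅) ∧
    c ^ 2 * W.m ∅ ≤ W.normSq 1 F := by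
  have hwpos := wv_pos hW
  have hsym := av_sym hW
  have hrow := av_row hW he
  obtain ⟨-, hbdd, -⟩ := exists_max_eigen hwpos hsym (fun _ => (1:ℝ))
    (hAz_of_row hsym hrow) (hne_one hW he)
  have hlam' : sSup (S (wv W) (av W) (fun _ => (1:ℝ))) ≤ lam := by
    rw [← secondEig_eq]; exact hsec
  have hmean' : ip (wv W) (fun u : ↥(W.K 1) => F ↑u) (fun _ => (1:ℝ))
      = c * ip (wv W) (fun _ => (1:ℝ)) (fun _ => (1:ℝ)) := by
    rw [← RQ2, ip_one_one hW]
    exact hmean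
  obtain ⟨h1, h2⟩ := decomp_le hwpos hsym hrow hbdd hlam' (fun u : ↥(W.K 1) => F ↑u) c hmean'
  rw [← RQ3, ← RQ1, ip_one_one hW] at h1
  rw [← RQ1, ip_one_one hW] at h2
  exact ⟨h1, h2⟩

lemma per_vertex_ge {W : WSC V} {e : ℕ} (hW : W.IsWSC e) (he : 1 ≤ e) {nu' : ℝ}
    (hsec : nu' ≤ W.smallestEig) (F : Finset V → ℝ) (c : ℝ)
    (hmean : ∑ η ∈ W.K 1, W.m η * F η = c * W.m ∅) :
    c ^ 2 * W.m ∅ + nu' * (W.normSq 1 F - c ^ 2 * W.m ∅) ≤ W.inn 1 (W.Mup' 1 F) F ∧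
    c ^ 2 * W.m ∅ ≤ W.normSq 1 F := by
  have hwpos := wv_pos hW
  have hsym := av_sym hW
  have hrow := av_row hW he
  have hm0 : 0 < W.m ∅ := hW.2.2.2.2.1 hW.1
  have hne0 : ∃ x : ↥(W.K 1) → ℝ, ip (wv W) x x ≠ 0 :=
    ⟨fun _ => (1:ℝ), by rw [ip_one_one hW]; exact hm0.ne'⟩
  obtain ⟨-, hbdd, -⟩ := exists_min_eigen hwpos hsym hne0
  have hnu' : nu' ≤ sInf (T (wv W) (av W)) := by
    rw [← smallestEig_eq]; exact hsec
  have hmean' : ip (wv W) (fun u : ↥(W.K 1) => F ↑u) (fun _ => (1:ℝ))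
      = c * ip (wv W) (fun _ => (1:ℝ)) (fun _ => (1:ℝ)) := by
    rw [← RQ2, ip_one_one hW]
    exact hmean
  obtain ⟨h1, h2⟩ := decomp_ge hwpos hsym hrow hbdd hnu' (fun u : ↥(W.K 1) => F ↑u) c hmean'
  rw [← RQ3, ← RQ1, ip_one_one hW] at h1
  rw [← RQ1, ip_one_one hW] at h2
  exact ⟨h1, h2⟩

/-- Garland sum: total link norms. -/
lemma garland_norm {Y : WSC V} {d : ℕ} (hY : Y.IsWSC d) (hd : 2 ≤ d) (F : Finset V → ℝ) :
    ∑ v ∈ Y.K 1, (Y.link v).normSq 1 F = ∑ σ ∈ Y.K 1, Y.m σ * (F σ * F σ) := by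
  have hper : ∀ v ∈ Y.K 1, (Y.link v).normSq 1 F
      = ∑ η ∈ Y.K 1, ew Y v η * (F η * F η) := by
    intro v hv
    rw [normSq_one, link_K1_eq hv, Finset.sum_filter]
    refine Finset.sum_congr rfl fun η _ => ?_
    unfold ew
    split
    · rfl
    · simp
  rw [Finset.sum_congr rfl hper, Finset.sum_comm]
  refine Finset.sum_congr rfl fun η hη => ?_
  rw [← Finset.sum_mul]
  have h2 : ∑ v ∈ Y.K 1, ew Y v η = Y.m η := by
    rw [Finset.sum_congr rfl fun v _ => ew_comm Y v η]
    exact deg1 hY (by omega) hη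
  rw [h2]

/-- Garland sum: total link Rayleigh quotients. -/
lemma garland_inn {Y : WSC V} {d : ℕ} (hY : Y.IsWSC d) (hd : 2 ≤ d) (F : Finset V → ℝ) :
    ∑ v ∈ Y.K 1, (Y.link v).inn 1 ((Y.link v).Mup' 1 F) F
      = ∑ σ ∈ Y.K 1, ∑ σ' ∈ Y.K 1, ew Y σ σ' * (F σ' * F σ) := by
  have hd1 : (1:ℕ) ≤ d := by omega
  have hper : ∀ v ∈ Y.K 1, (Y.link v).inn 1 ((Y.link v).Mup' 1 F) F
      = ∑ η ∈ Y.K 1, ∑ η' ∈ Y.K 1, ew (Y.link v) η η' * (F η' * F η) := by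
    intro v hv
    obtain ⟨hvf, hvc⟩ := mem_K.1 hv
    have hZ : (Y.link v).IsWSC (d - 1) := link_isWSC hY hvf hvc hd1
    rw [inn_Mup'_one hZ F F]
    have hsub : (Y.link v).K 1 ⊆ Y.K 1 := by
      rw [link_K1_eq hv]; exact Finset.filter_subset _ _
    rw [Finset.sum_subset hsub]
    · refine Finset.sum_congr rfl fun η hη => ?_
      rw [Finset.sum_subset hsub]
      intro η' hη' hη'n
      rw [link_ew_eq_zero hY hd1 hv hη hη' (Or.inr hη'n)]
      ring
    · intro η hη hηn
      refine Finset.sum_eq_zero fun η' hη' => ?_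
      rw [link_ew_eq_zero hY hd1 hv hη (hsub hη') (Or.inl hηn)]
      ring
  rw [Finset.sum_congr rfl hper, Finset.sum_comm]
  refine Finset.sum_congr rfl fun η hη => ?_
  rw [Finset.sum_comm]
  refine Finset.sum_congr rfl fun η' hη' => ?_
  rw [← Finset.sum_mul, tri_sum hY hd hη hη']

end WSCAux4
namespace WSCAux5
open WSC SpecAux WSCAux WSCAux2 WSCAux3 WSCAux4

variable {V : Type*} [DecidableEq V]

/-- Finset version of the eigen equation and the associated Garland identities. -/
lemma master {Y : WSC V} {d : ℕ} (hY : Y.IsWSC d) (hd : 2 ≤ d) (F : Finset V → ℝ)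
    (μ : ℝ)
    (heig : ∀ σ ∈ Y.K 1, ∑ σ' ∈ Y.K 1, ew Y σ σ' * F σ' = μ * (Y.m σ * F σ))
    (hnorm : ∑ σ ∈ Y.K 1, Y.m σ * (F σ * F σ) = 1) :
    (∀ v ∈ Y.K 1, ∑ η ∈ (Y.link v).K 1, (Y.link v).m η * F η
        = (μ * F v) * (Y.link v).m ∅) ∧
    (∑ σ ∈ Y.K 1, ∑ σ' ∈ Y.K 1, ew Y σ σ' * (F σ' * F σ)) = μ ∧
    (∑ v ∈ Y.K 1, (μ * F v) ^ 2 * (Y.link v).m ∅) = μ ^ 2 ∧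
    (∑ v ∈ Y.K 1, (Y.link v).normSq 1 F) = 1 := by
  refine ⟨?_, ?_, ?_, ?_⟩
  · intro v hv
    rw [link_m_empty, link_K1_eq hv, Finset.sum_filter]
    have h1 : ∀ η ∈ Y.K 1,
        (if v ∪ η ∈ Y.K 2 then (Y.link v).m η * F η else 0) = ew Y v η * F η := by
      intro η _
      unfold ew
      split
      · rfl
      · ring
    rw [Finset.sum_congr rfl h1, heig v hv]
    ring
  · have h1 : ∀ σ ∈ Y.K 1, ∑ σ' ∈ Y.K 1, ew Y σ σ' * (F σ' * F σ)
        = μ * (Y.m σ * (F σ * F σ)) := by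
      intro σ hσ
      have h2 : ∑ σ' ∈ Y.K 1, ew Y σ σ' * (F σ' * F σ)
          = (∑ σ' ∈ Y.K 1, ew Y σ σ' * F σ') * F σ := by
        rw [Finset.sum_mul]
        exact Finset.sum_congr rfl fun σ' _ => by ring
      rw [h2, heig σ hσ]
      ring
    rw [Finset.sum_congr rfl h1, ← Finset.mul_sum, hnorm, mul_one]
  · have h1 : ∀ v ∈ Y.K 1, (μ * F v) ^ 2 * (Y.link v).m ∅
        = μ ^ 2 * (Y.m v * (F v * F v)) := by
      intro v _
      rw [link_m_empty]
      ring
    rw [Finset.sum_congr rfl h1, ← Finset.mul_sum, hnorm, mul_one]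
  · rw [garland_norm hY hd F, hnorm]

/-- the main quadratic inequality for the top eigenvalue. -/
lemma key_quad_le {Y : WSC V} {d : ℕ} (hY : Y.IsWSC d) (hd : 2 ≤ d) (F : Finset V → ℝ)
    {μ lam : ℝ}
    (hloc : ∀ v ∈ Y.K 1, (Y.link v).secondEig ≤ lam)
    (heig : ∀ σ ∈ Y.K 1, ∑ σ' ∈ Y.K 1, ew Y σ σ' * F σ' = μ * (Y.m σ * F σ))
    (hnorm : ∑ σ ∈ Y.K 1, Y.m σ * (F σ * F σ) = 1) :
    μ ≤ μ ^ 2 + lam * (1 - μ ^ 2) := by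
  obtain ⟨hmean, hEFF, hG3, hG2⟩ := master hY hd F μ heig hnorm
  have hd1 : (1:ℕ) ≤ d := by omega
  have hbound : ∀ v ∈ Y.K 1,
      (Y.link v).inn 1 ((Y.link v).Mup' 1 F) F
        ≤ (μ * F v) ^ 2 * (Y.link v).m ∅
          + lam * ((Y.link v).normSq 1 F - (μ * F v) ^ 2 * (Y.link v).m ∅) := by
    intro v hv
    obtain ⟨hvf, hvc⟩ := mem_K.1 hv
    have hZ : (Y.link v).IsWSC (d - 1) := link_isWSC hY hvf hvc hd1
    exact (per_vertex_le hZ (by omega) (hloc v hv) F (μ * F v) (hmean v hv)).1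
  have hsum := Finset.sum_le_sum hbound
  rw [garland_inn hY hd F, hEFF] at hsum
  have hsplit : ∑ v ∈ Y.K 1, ((μ * F v) ^ 2 * (Y.link v).m ∅
      + lam * ((Y.link v).normSq 1 F - (μ * F v) ^ 2 * (Y.link v).m ∅))
      = (∑ v ∈ Y.K 1, (μ * F v) ^ 2 * (Y.link v).m ∅)
        + lam * ((∑ v ∈ Y.K 1, (Y.link v).normSq 1 F)
          - ∑ v ∈ Y.K 1, (μ * F v) ^ 2 * (Y.link v).m ∅) := by
    rw [Finset.sum_add_distrib]
    congr 1
    rw [← Finset.sum_sub_distrib, ← Finset.mul_sum]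
  rw [hsplit, hG3, hG2] at hsum
  exact hsum

/-- the main quadratic inequality for the bottom eigenvalue. -/
lemma key_quad_ge {Y : WSC V} {d : ℕ} (hY : Y.IsWSC d) (hd : 2 ≤ d) (F : Finset V → ℝ)
    {ν nu' : ℝ}
    (hloc : ∀ v ∈ Y.K 1, nu' ≤ (Y.link v).smallestEig)
    (heig : ∀ σ ∈ Y.K 1, ∑ σ' ∈ Y.K 1, ew Y σ σ' * F σ' = ν * (Y.m σ * F σ))
    (hnorm : ∑ σ ∈ Y.K 1, Y.m σ * (F σ * F σ) = 1) :
    ν ^ 2 + nu' * (1 - ν ^ 2) ≤ ν := by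
  obtain ⟨hmean, hEFF, hG3, hG2⟩ := master hY hd F ν heig hnorm
  have hd1 : (1:ℕ) ≤ d := by omega
  have hbound : ∀ v ∈ Y.K 1,
      (ν * F v) ^ 2 * (Y.link v).m ∅
          + nu' * ((Y.link v).normSq 1 F - (ν * F v) ^ 2 * (Y.link v).m ∅)
        ≤ (Y.link v).inn 1 ((Y.link v).Mup' 1 F) F := by
    intro v hv
    obtain ⟨hvf, hvc⟩ := mem_K.1 hv
    have hZ : (Y.link v).IsWSC (d - 1) := link_isWSC hY hvf hvc hd1
    exact (per_vertex_ge hZ (by omega) (hloc v hv) F (ν * F v) (hmean v hv)).1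
  have hsum := Finset.sum_le_sum hbound
  rw [garland_inn hY hd F, hEFF] at hsum
  have hsplit : ∑ v ∈ Y.K 1, ((ν * F v) ^ 2 * (Y.link v).m ∅
      + nu' * ((Y.link v).normSq 1 F - (ν * F v) ^ 2 * (Y.link v).m ∅))
      = (∑ v ∈ Y.K 1, (ν * F v) ^ 2 * (Y.link v).m ∅)
        + nu' * ((∑ v ∈ Y.K 1, (Y.link v).normSq 1 F)
          - ∑ v ∈ Y.K 1, (ν * F v) ^ 2 * (Y.link v).m ∅) := by
    rw [Finset.sum_add_distrib]
    congr 1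
    rw [← Finset.sum_sub_distrib, ← Finset.mul_sum]
  rw [hsplit, hG3, hG2] at hsum
  exact hsum

/-- connectivity forces the second eigenvalue below 1. -/
lemma eig_lt_one {Y : WSC V} {d : ℕ} (hY : Y.IsWSC d) (hd : 2 ≤ d)
    (hconn : Y.skeleton.Connected) (F : Finset V → ℝ) {μ : ℝ}
    (heig : ∀ σ ∈ Y.K 1, ∑ σ' ∈ Y.K 1, ew Y σ σ' * F σ' = μ * (Y.m σ * F σ))
    (hnorm : ∑ σ ∈ Y.K 1, Y.m σ * (F σ * F σ) = 1)
    (hzsum : ∑ σ ∈ Y.K 1, Y.m σ * F σ = 0) : μ < 1 := by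
  have hd1 : (1:ℕ) ≤ d := by omega
  by_contra hge
  push_neg at hge
  -- the three edge sums
  have hSa : ∑ σ ∈ Y.K 1, ∑ σ' ∈ Y.K 1, ew Y σ σ' * (F σ * F σ) = 1 := by
    have h1 : ∀ σ ∈ Y.K 1, ∑ σ' ∈ Y.K 1, ew Y σ σ' * (F σ * F σ)
        = Y.m σ * (F σ * F σ) := by
      intro σ hσ
      rw [← Finset.sum_mul, deg1 hY hd1 hσ]
    rw [Finset.sum_congr rfl h1, hnorm]
  have hSb : ∑ σ ∈ Y.K 1, ∑ σ' ∈ Y.K 1, ew Y σ σ' * (F σ' * F σ') = 1 := by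
    rw [Finset.sum_comm]
    have h1 : ∀ σ' ∈ Y.K 1, ∑ σ ∈ Y.K 1, ew Y σ σ' * (F σ' * F σ')
        = Y.m σ' * (F σ' * F σ') := by
      intro σ' hσ'
      rw [← Finset.sum_mul, Finset.sum_congr rfl fun σ _ => ew_comm Y σ σ',
        deg1 hY hd1 hσ']
    rw [Finset.sum_congr rfl h1, hnorm]
  have hSc : ∑ σ ∈ Y.K 1, ∑ σ' ∈ Y.K 1, ew Y σ σ' * (F σ' * F σ) = μ := by
    have h1 : ∀ σ ∈ Y.K 1, ∑ σ' ∈ Y.K 1, ew Y σ σ' * (F σ' * F σ)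
        = μ * (Y.m σ * (F σ * F σ)) := by
      intro σ hσ
      have h2 : ∑ σ' ∈ Y.K 1, ew Y σ σ' * (F σ' * F σ)
          = (∑ σ' ∈ Y.K 1, ew Y σ σ' * F σ') * F σ := by
        rw [Finset.sum_mul]
        exact Finset.sum_congr rfl fun σ' _ => by ring
      rw [h2, heig σ hσ]
      ring
    rw [Finset.sum_congr rfl h1, ← Finset.mul_sum, hnorm, mul_one]
  have hQ : ∑ σ ∈ Y.K 1, ∑ σ' ∈ Y.K 1, ew Y σ σ' * (F σ - F σ') ^ 2 = 2 - 2 * μ := by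
    have h1 : ∀ σ ∈ Y.K 1, ∑ σ' ∈ Y.K 1, ew Y σ σ' * (F σ - F σ') ^ 2
        = ∑ σ' ∈ Y.K 1, (ew Y σ σ' * (F σ * F σ) + ew Y σ σ' * (F σ' * F σ')
          - 2 * (ew Y σ σ' * (F σ' * F σ))) :=
      fun σ _ => Finset.sum_congr rfl fun σ' _ => by ring
    rw [Finset.sum_congr rfl h1]
    have h2 : ∀ σ ∈ Y.K 1, ∑ σ' ∈ Y.K 1, (ew Y σ σ' * (F σ * F σ)
          + ew Y σ σ' * (F σ' * F σ') - 2 * (ew Y σ σ' * (F σ' * F σ)))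
        = (∑ σ' ∈ Y.K 1, ew Y σ σ' * (F σ * F σ))
          + (∑ σ' ∈ Y.K 1, ew Y σ σ' * (F σ' * F σ'))
          - 2 * ∑ σ' ∈ Y.K 1, ew Y σ σ' * (F σ' * F σ) := by
      intro σ _
      rw [Finset.sum_sub_distrib, Finset.sum_add_distrib, Finset.mul_sum]
    rw [Finset.sum_congr rfl h2, Finset.sum_sub_distrib, Finset.sum_add_distrib,
      hSa, hSb, ← Finset.mul_sum, hSc]
    ring
  have hQnn : 0 ≤ ∑ σ ∈ Y.K 1, ∑ σ' ∈ Y.K 1, ew Y σ σ' * (F σ - F σ') ^ 2 :=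
    Finset.sum_nonneg fun σ _ => Finset.sum_nonneg fun σ' _ =>
      mul_nonneg (ew_nonneg hY σ σ') (sq_nonneg _)
  have hμ1 : μ = 1 := by linarith [hQ ▸ hQnn]
  have hQ0 : ∑ σ ∈ Y.K 1, ∑ σ' ∈ Y.K 1, ew Y σ σ' * (F σ - F σ') ^ 2 = 0 := by
    rw [hQ, hμ1]; ring
  have hterm : ∀ σ ∈ Y.K 1, ∀ σ' ∈ Y.K 1, ew Y σ σ' * (F σ - F σ') ^ 2 = 0 := by
    intro σ hσ σ' hσ'
    have houter := (Finset.sum_eq_zero_iff_of_nonneg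
      (fun σ hσ => Finset.sum_nonneg fun σ' _ =>
        mul_nonneg (ew_nonneg hY σ σ') (sq_nonneg _))).1 hQ0 σ hσ
    exact (Finset.sum_eq_zero_iff_of_nonneg
      (fun σ' _ => mul_nonneg (ew_nonneg hY σ σ') (sq_nonneg _))).1 houter σ' hσ'
  have hedge : ∀ σ ∈ Y.K 1, ∀ σ' ∈ Y.K 1, σ ∪ σ' ∈ Y.K 2 → F σ = F σ' := by
    intro σ hσ σ' hσ' hK2
    have h := hterm σ hσ σ' hσ'
    unfold ew at h
    rw [if_pos hK2] at h
    have hm := (m_pos_K hY hK2).ne'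
    rcases mul_eq_zero.1 h with h' | h'
    · exact absurd h' hm
    · have := sq_eq_zero_iff.1 h'
      linarith [this]
  -- constancy along the skeleton
  have hvK1 : ∀ p : {v : V // ({v} : Finset V) ∈ Y.faces}, ({(p : V)} : Finset V) ∈ Y.K 1 :=
    fun p => mem_K.2 ⟨p.2, Finset.card_singleton _⟩
  have hadj : ∀ p q, Y.skeleton.Adj p q → F {(p : V)} = F {(q : V)} := by
    intro p q hpq
    obtain ⟨hne, hface⟩ := hpq
    have hne' : (p : V) ≠ (q : V) := fun h => hne (Subtype.ext h)
    have hK2 : ({(p : V)} : Finset V) ∪ {(q : V)} ∈ Y.K 2 := by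
      have hu : ({(p : V)} : Finset V) ∪ {(q : V)} = {(p : V), (q : V)} := rfl
      rw [hu]
      refine mem_K.2 ⟨hface, ?_⟩
      rw [Finset.card_insert_of_notMem (Finset.notMem_singleton.2 hne')]
      rfl
    exact hedge _ (hvK1 p) _ (hvK1 q) hK2
  have hwalk : ∀ p q, Y.skeleton.Walk p q → F {(p : V)} = F {(q : V)} := by
    intro p q w
    induction w with
    | nil => rfl
    | cons h _ ih => exact (hadj _ _ h).trans ih
  have hconst : ∀ σ ∈ Y.K 1, ∀ σ' ∈ Y.K 1, F σ = F σ' := by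
    intro σ hσ σ' hσ'
    obtain ⟨p, rfl⟩ := Finset.card_eq_one.1 (mem_K.1 hσ).2
    obtain ⟨q, rfl⟩ := Finset.card_eq_one.1 (mem_K.1 hσ').2
    have hp : ({p} : Finset V) ∈ Y.faces := K_subset_faces hσ
    have hq : ({q} : Finset V) ∈ Y.faces := K_subset_faces hσ'
    obtain ⟨w⟩ := hconn.preconnected ⟨p, hp⟩ ⟨q, hq⟩
    exact hwalk ⟨p, hp⟩ ⟨q, hq⟩ w
  obtain ⟨σ₀, hσ₀⟩ := K_nonempty hY (show 1 ≤ d + 1 by omega)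
  have hz2 : ∑ σ ∈ Y.K 1, Y.m σ * F σ = Y.m ∅ * F σ₀ := by
    rw [Finset.sum_congr rfl fun σ hσ => by rw [hconst σ hσ σ₀ hσ₀]]
    rw [← Finset.sum_mul, sum_K1_weight hY]
  have hm0 : 0 < Y.m ∅ := hY.2.2.2.2.1 hY.1
  have hF0 : F σ₀ = 0 := by
    rw [hzsum] at hz2
    rcases mul_eq_zero.1 hz2.symm with h | h
    · exact absurd h hm0.ne'
    · exact h
  have h1 : ∑ σ ∈ Y.K 1, Y.m σ * (F σ * F σ) = 0 :=
    Finset.sum_eq_zero fun σ hσ => by rw [hconst σ hσ σ₀ hσ₀, hF0]; ring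
  rw [hnorm] at h1
  exact one_ne_zero h1

end WSCAux5
namespace WSCAux6
open WSC SpecAux WSCAux WSCAux2 WSCAux3 WSCAux4 WSCAux5

variable {V : Type*} [DecidableEq V]

/-- convert an abstract eigen pair to Finset form. -/
lemma eigen_to_finset {Y : WSC V} {d : ℕ} (hY : Y.IsWSC d) (ψ : ↥(Y.K 1) → ℝ) (μ : ℝ)
    (heig : ∀ u, app (av Y) ψ u = μ * ψ u) :
    ∀ σ ∈ Y.K 1, ∑ σ' ∈ Y.K 1, ew Y σ σ' * ext Y ψ σ' = μ * (Y.m σ * ext Y ψ σ) := by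
  have hrest := fun u => congrFun (ext_restrict Y ψ) u
  intro σ hσ
  have h := heig ⟨σ, hσ⟩
  have happ : app (av Y) ψ ⟨σ, hσ⟩
      = (∑ σ' ∈ Y.K 1, ew Y σ σ' * ext Y ψ σ') / Y.m σ := by
    unfold app av
    have h1 : ∀ v : ↥(Y.K 1), ew Y σ ↑v / Y.m σ * ψ v
        = (fun σ' => ew Y σ σ' * ext Y ψ σ') ↑v / Y.m σ := by
      intro v
      rw [← hrest v]
      show ew Y σ ↑v / Y.m σ * ext Y ψ ↑v = ew Y σ ↑v * ext Y ψ ↑v / Y.m σ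
      ring
    rw [Finset.sum_congr rfl fun v _ => h1 v, ← Finset.sum_div,
      Finset.sum_coe_sort (Y.K 1) (fun σ' => ew Y σ σ' * ext Y ψ σ')]
  rw [happ] at h
  have hm : Y.m σ ≠ 0 := (m_pos_K hY hσ).ne'
  rw [div_eq_iff hm] at h
  have hrσ : ψ ⟨σ, hσ⟩ = ext Y ψ σ := (hrest ⟨σ, hσ⟩).symm
  rw [hrσ] at h
  rw [h]
  ring

lemma trickle_mu {Y : WSC V} {d : ℕ} (hY : Y.IsWSC d) (hd : 2 ≤ d)
    (hconn : Y.skeleton.Connected) {lam : ℝ} (hlam : lam < 1)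
    (hloc : ∀ v ∈ Y.K 1, (Y.link v).secondEig ≤ lam) :
    Y.secondEig ≤ lam / (1 - lam) := by
  have hd1 : (1:ℕ) ≤ d := by omega
  have hwpos := wv_pos hY
  have hsym := av_sym hY
  have hrow := av_row hY hd1
  obtain ⟨hSne, hbdd, ψ, hψz, hψ1, heig⟩ := exists_max_eigen hwpos hsym
    (fun _ => (1:ℝ)) (hAz_of_row hsym hrow) (hne_one hY hd1)
  set μ := sSup (S (wv Y) (av Y) (fun _ => (1:ℝ))) with hμdef
  have hsecond : Y.secondEig = μ := secondEig_eq Y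
  set F : Finset V → ℝ := ext Y ψ with hF
  have heigF := eigen_to_finset hY ψ μ heig
  have hnorm : ∑ σ ∈ Y.K 1, Y.m σ * (F σ * F σ) = 1 := by
    have := RQ1 Y F
    rw [ext_restrict] at this
    rw [← normSq_one, this]
    exact hψ1
  have hzsum : ∑ σ ∈ Y.K 1, Y.m σ * F σ = 0 := by
    have := RQ2 Y F
    rw [ext_restrict] at this
    rw [this]
    exact hψz
  have hquad := key_quad_le hY hd F hloc heigF hnorm
  have hμ1 := eig_lt_one hY hd hconn F heigF hnorm hzsum
  rw [hsecond]
  rw [le_div_iff₀ (by linarith : (0:ℝ) < 1 - lam)]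
  have hfact : (1 - μ) * (μ * (1 - lam) - lam) = μ - μ ^ 2 - lam * (1 - μ ^ 2) := by
    ring
  nlinarith [hquad, hμ1, hfact]

lemma trickle_nu {Y : WSC V} {d : ℕ} (hY : Y.IsWSC d) (hd : 2 ≤ d)
    {nu' : ℝ} (hnu0 : nu' ≤ 0)
    (hloc : ∀ v ∈ Y.K 1, nu' ≤ (Y.link v).smallestEig) :
    nu' / (1 - nu') ≤ Y.smallestEig := by
  have hd1 : (1:ℕ) ≤ d := by omega
  have hwpos := wv_pos hY
  have hsym := av_sym hY
  have hm0 : 0 < Y.m ∅ := hY.2.2.2.2.1 hY.1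
  have hne0 : ∃ x : ↥(Y.K 1) → ℝ, ip (wv Y) x x ≠ 0 :=
    ⟨fun _ => (1:ℝ), by rw [ip_one_one hY]; exact hm0.ne'⟩
  obtain ⟨hTne, hTbdd, ψ, hψ1, heig⟩ := exists_min_eigen hwpos hsym hne0
  set ν := sInf (T (wv Y) (av Y)) with hνdef
  have hsmall : Y.smallestEig = ν := smallestEig_eq Y
  set F : Finset V → ℝ := ext Y ψ with hF
  have heigF := eigen_to_finset hY ψ ν heig
  have hnorm : ∑ σ ∈ Y.K 1, Y.m σ * (F σ * F σ) = 1 := by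
    have := RQ1 Y F
    rw [ext_restrict] at this
    rw [← normSq_one, this]
    exact hψ1
  have hquad := key_quad_ge hY hd F hloc heigF hnorm
  rw [hsmall]
  have hden : (0:ℝ) < 1 - nu' := by linarith
  rcases le_or_gt 0 ν with hν | hν
  · have : nu' / (1 - nu') ≤ 0 := div_nonpos_of_nonpos_of_nonneg hnu0 (by linarith)
    linarith
  · rw [div_le_iff₀ hden]
    have hfact : (1 - ν) * (ν * (1 - nu') - nu') = ν - ν ^ 2 - nu' * (1 - ν ^ 2) := by
      ring
    nlinarith [hquad, hν, hfact]

end WSCAux6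
namespace WSCAux7
open WSC SpecAux WSCAux WSCAux2 WSCAux3 WSCAux4 WSCAux5 WSCAux6

variable {V : Type*} [DecidableEq V]

lemma mu_set_eq (X : WSC V) (c : ℕ) :
    {r : ℝ | ∃ τ ∈ X.K c, r = (X.link τ).secondEig}
      = ↑((X.K c).image fun τ => (X.link τ).secondEig) := by
  ext r
  simp [eq_comm]

lemma nu_set_eq (X : WSC V) (c : ℕ) :
    {r : ℝ | ∃ τ ∈ X.K c, r = (X.link τ).smallestEig}
      = ↑((X.K c).image fun τ => (X.link τ).smallestEig) := by
  ext r
  simp [eq_comm]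

lemma mu_set_bddAbove (X : WSC V) (c : ℕ) :
    BddAbove {r : ℝ | ∃ τ ∈ X.K c, r = (X.link τ).secondEig} := by
  rw [mu_set_eq]
  exact ((X.K c).image _).finite_toSet.bddAbove

lemma nu_set_bddBelow (X : WSC V) (c : ℕ) :
    BddBelow {r : ℝ | ∃ τ ∈ X.K c, r = (X.link τ).smallestEig} := by
  rw [nu_set_eq]
  exact ((X.K c).image _).finite_toSet.bddBelow

lemma mu_set_nonempty {X : WSC V} {n : ℕ} (hX : X.IsWSC n) {c : ℕ} (hc : c ≤ n + 1) :
    {r : ℝ | ∃ τ ∈ X.K c, r = (X.link τ).secondEig}.Nonempty := by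
  obtain ⟨τ, hτ⟩ := K_nonempty hX hc
  exact ⟨_, τ, hτ, rfl⟩

lemma nu_set_nonempty {X : WSC V} {n : ℕ} (hX : X.IsWSC n) {c : ℕ} (hc : c ≤ n + 1) :
    {r : ℝ | ∃ τ ∈ X.K c, r = (X.link τ).smallestEig}.Nonempty := by
  obtain ⟨τ, hτ⟩ := K_nonempty hX hc
  exact ⟨_, τ, hτ, rfl⟩

lemma link_union_mem {X : WSC V} {n : ℕ} (hX : X.IsWSC n) {c : ℕ} {τ v : Finset V}
    (hτ : τ ∈ X.K c) (hv : v ∈ (X.link τ).K 1) : τ ∪ v ∈ X.K (c + 1) := by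
  obtain ⟨hvf, hvc⟩ := mem_K.1 hv
  obtain ⟨h1, h2, h3⟩ := mem_link_faces.1 hvf
  refine mem_K.2 ⟨h3, ?_⟩
  rw [Finset.card_union_of_disjoint, (mem_K.1 hτ).2, hvc]
  rw [Finset.disjoint_iff_inter_eq_empty, Finset.inter_comm]
  exact h2

lemma step_mu {X : WSC V} {n : ℕ} (hX : X.IsWSC n) (hconn : X.LinksConnected n)
    {c : ℕ} (hc : c + 2 ≤ n) {lam : ℝ} (hlam : lam < 1)
    (hmu : X.mu (c + 1) ≤ lam) : X.mu c ≤ lam / (1 - lam) := by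
  refine csSup_le (mu_set_nonempty hX (by omega)) ?_
  rintro r ⟨τ, hτ, rfl⟩
  obtain ⟨hτf, hτc⟩ := mem_K.1 hτ
  have hY : (X.link τ).IsWSC (n - c) := link_isWSC hX hτf hτc (by omega)
  refine trickle_mu hY (by omega) (hconn c (by omega) τ hτ) hlam ?_
  intro v hv
  have hvf : v ∈ (X.link τ).faces := K_subset_faces hv
  rw [link_link hX hvf]
  refine le_trans (le_csSup (mu_set_bddAbove X (c + 1)) ?_) hmu
  exact ⟨τ ∪ v, link_union_mem hX hτ hv, rfl⟩

lemma step_nu {X : WSC V} {n : ℕ} (hX : X.IsWSC n) (hconn : X.LinksConnected n)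
    {c : ℕ} (hc : c + 2 ≤ n) {nu' : ℝ} (hnu0 : nu' ≤ 0)
    (hnu : nu' ≤ X.nu (c + 1)) : nu' / (1 - nu') ≤ X.nu c := by
  refine le_csInf (nu_set_nonempty hX (by omega)) ?_
  rintro r ⟨τ, hτ, rfl⟩
  obtain ⟨hτf, hτc⟩ := mem_K.1 hτ
  have hY : (X.link τ).IsWSC (n - c) := link_isWSC hX hτf hτc (by omega)
  refine trickle_nu hY (by omega) hnu0 ?_
  intro v hv
  have hvf : v ∈ (X.link τ).faces := K_subset_faces hv
  rw [link_link hX hvf]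
  refine le_trans hnu (csInf_le (nu_set_bddBelow X (c + 1)) ?_)
  exact ⟨τ ∪ v, link_union_mem hX hτ hv, rfl⟩

lemma aux_lt_one {a b : ℕ} (hab : a ≤ b) {μ : ℝ} (h : (b : ℝ) * μ < 1) :
    (a : ℝ) * μ < 1 := by
  rcases le_or_gt 0 μ with hμ | hμ
  · have hc : (a : ℝ) ≤ (b : ℝ) := Nat.cast_le.2 hab
    nlinarith
  · nlinarith [Nat.cast_nonneg (α := ℝ) a]

lemma chain_mu {X : WSC V} {n : ℕ} (hX : X.IsWSC n) (hconn : X.LinksConnected n)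
    {k : ℕ} (hk : k + 2 ≤ n)
    (hsmall : ((n - 1 - k : ℕ) : ℝ) * X.mu (n - 1) < 1) :
    X.mu k ≤ X.mu (n - 1) / (1 - ((n - 1 - k : ℕ) : ℝ) * X.mu (n - 1)) := by
  set μ := X.mu (n - 1) with hμdef
  have claim : ∀ j : ℕ, j ≤ n - 1 - k → X.mu (n - 1 - j) ≤ μ / (1 - (j : ℝ) * μ) := by
    intro j
    induction j with
    | zero =>
      intro _
      simp only [Nat.sub_zero, Nat.cast_zero, zero_mul, sub_zero, div_one]
      exact le_refl μ
    | succ j ih =>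
      intro hj
      have hIH := ih (by omega)
      have hjμ1 : ((j : ℝ) + 1) * μ < 1 := by
        have := aux_lt_one (a := j + 1) (b := n - 1 - k) (by omega) hsmall
        push_cast at this
        exact this
      have hjμ : (j : ℝ) * μ < 1 := by
        have := aux_lt_one (a := j) (b := n - 1 - k) (by omega) hsmall
        exact this
      have hden : (0 : ℝ) < 1 - (j : ℝ) * μ := by linarith
      have hden2 : (0 : ℝ) < 1 - ((j : ℝ) + 1) * μ := by linarith
      have hL1 : μ / (1 - (j : ℝ) * μ) < 1 := by
        rw [div_lt_one hden]
        have he : ((j : ℝ) + 1) * μ = (j : ℝ) * μ + μ := by ring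
        linarith [he ▸ hjμ1]
      have hidx : n - 1 - (j + 1) + 1 = n - 1 - j := by omega
      have hmu' : X.mu (n - 1 - (j + 1) + 1) ≤ μ / (1 - (j : ℝ) * μ) := by
        rw [hidx]; exact hIH
      have hstep := step_mu hX hconn (c := n - 1 - (j + 1)) (by omega) hL1 hmu'
      have halg : (μ / (1 - (j : ℝ) * μ)) / (1 - μ / (1 - (j : ℝ) * μ))
          = μ / (1 - ((j : ℝ) + 1) * μ) := by
        rw [div_div]
        congr 1
        field_simp
        ring
      rw [halg] at hstep
      push_cast
      exact hstep
  have hfinal := claim (n - 1 - k) (le_refl _)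
  have hidx : n - 1 - (n - 1 - k) = k := by omega
  rw [hidx] at hfinal
  exact hfinal

lemma chain_nu {X : WSC V} {n : ℕ} (hX : X.IsWSC n) (hconn : X.LinksConnected n)
    {k : ℕ} (hk : k + 2 ≤ n) (hnu0 : X.nu (n - 1) ≤ 0) :
    X.nu (n - 1) / (1 - ((n - 1 - k : ℕ) : ℝ) * X.nu (n - 1)) ≤ X.nu k := by
  set ν := X.nu (n - 1) with hνdef
  have claim : ∀ j : ℕ, j ≤ n - 1 - k → ν / (1 - (j : ℝ) * ν) ≤ X.nu (n - 1 - j) := by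
    intro j
    induction j with
    | zero =>
      intro _
      simp only [Nat.sub_zero, Nat.cast_zero, zero_mul, sub_zero, div_one]
      exact le_refl ν
    | succ j ih =>
      intro hj
      have hIH := ih (by omega)
      have hjν : (j : ℝ) * ν ≤ 0 :=
        mul_nonpos_of_nonneg_of_nonpos (Nat.cast_nonneg j) hnu0
      have hjν1 : ((j : ℝ) + 1) * ν ≤ 0 :=
        mul_nonpos_of_nonneg_of_nonpos (by positivity) hnu0
      have hden : (0 : ℝ) < 1 - (j : ℝ) * ν := by linarith
      have hden2 : (0 : ℝ) < 1 - ((j : ℝ) + 1) * ν := by linarith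
      have hnu0' : ν / (1 - (j : ℝ) * ν) ≤ 0 :=
        div_nonpos_of_nonpos_of_nonneg hnu0 hden.le
      have hidx : n - 1 - (j + 1) + 1 = n - 1 - j := by omega
      have hnu' : ν / (1 - (j : ℝ) * ν) ≤ X.nu (n - 1 - (j + 1) + 1) := by
        rw [hidx]; exact hIH
      have hstep := step_nu hX hconn (c := n - 1 - (j + 1)) (by omega) hnu0' hnu'
      have halg : (ν / (1 - (j : ℝ) * ν)) / (1 - ν / (1 - (j : ℝ) * ν))
          = ν / (1 - ((j : ℝ) + 1) * ν) := by
        rw [div_div]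
        congr 1
        field_simp
        ring
      rw [halg] at hstep
      push_cast
      exact hstep
  have hfinal := claim (n - 1 - k) (le_refl _)
  have hidx : n - 1 - (n - 1 - k) = k := by omega
  rw [hidx] at hfinal
  exact hfinal

end WSCAux7
open WSC
/-- If all links of `X` of dimension `≥ 1` (including `X` itself) are
connected, then for every `0 ≤ k ≤ n-2`: if `(n-1-k)·μ_{n-1} < 1` then
`μ_k ≤ μ_{n-1}/(1 - (n-1-k)·μ_{n-1})`, and if `ν_{n-1} ≤ 0` then
`ν_k ≥ ν_{n-1}/(1 - (n-1-k)·ν_{n-1})`. -/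
theorem spectral_descent {V : Type*} [DecidableEq V] (X : WSC V) (n : ℕ)
    (hX : X.IsWSC n) (hconn : X.LinksConnected n) (k : ℕ) (hk : k + 2 ≤ n) :
    (((n - 1 - k : ℕ) : ℝ) * X.mu (n - 1) < 1 →
      X.mu k ≤ X.mu (n - 1) / (1 - ((n - 1 - k : ℕ) : ℝ) * X.mu (n - 1))) ∧
    (X.nu (n - 1) ≤ 0 →
      X.nu k ≥ X.nu (n - 1) / (1 - ((n - 1 - k : ℕ) : ℝ) * X.nu (n - 1))) := by
  constructor
  · intro hsmall
    exact WSCAux7.chain_mu hX hconn hk hsmall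
  · intro hnu0
    exact WSCAux7.chain_nu hX hconn hk hnu0
end
end

section
/- Suppose all the links of X of dimension ≥ 1 (including X itself) are connected, and let 0 < λ ≤ 1. If μ_{n−1} ≤ λ/(1 + (n−1)λ), then X is a one-sided λ-local spectral expander; moreover, if additionally −λ/(1 + (n−1)λ) ≤ ν_{n−1}, then X is a two-sided λ-local spectral expander. -/
/-!
Framework: a pure `n`-dimensional finite weighted simplicial complex, following
Kaufman–Oppenheim, "High Order Random Walks: Beyond Spectral Gap".

A complex is given by its finset of faces (finsets of a vertex type `V`) together with
a weight function `m`.  We index levels by **cardinality**: `X.K c` is the set of faces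
with `c` elements, i.e. the set `X(k)` of `k`-dimensional faces for `k = c - 1`
(so `X(-1) = X.K 0`, and a pure `n`-dimensional complex has top level `X.K (n+1)`).
-/

noncomputable section

open Finset

/-! ### Auxiliary development for the trickle-down theorem -/

namespace WSC

variable {V : Type*} [DecidableEq V]

lemma mem_K {Y : WSC V} {σ : Finset V} {c : ℕ} : σ ∈ Y.K c ↔ σ ∈ Y.faces ∧ σ.card = c :=
  Finset.mem_filter

lemma m_pos {Y : WSC V} {d : ℕ} (hY : Y.IsWSC d) {σ : Finset V} {c : ℕ} (h : σ ∈ Y.K c) :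
    0 < Y.m σ := hY.2.2.2.2.1 (mem_K.1 h).1

lemma m_eq_sum_compl {Y : WSC V} {d : ℕ} (hY : Y.IsWSC d) {σ : Finset V} {c : ℕ}
    (hσ : σ ∈ Y.K c) (hc : c ≤ d) :
    Y.m σ = ∑ u ∈ (Y.K 1).filter (fun u => σ ∪ u ∈ Y.K (c + 1)), Y.m (σ ∪ u) := by
  obtain ⟨hσf, hσc⟩ := mem_K.1 hσ
  rw [hY.2.2.2.2.2 hσf (by omega)]
  refine Finset.sum_nbij' (fun t => t \ σ) (fun u => σ ∪ u) ?_ ?_ ?_ ?_ ?_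
  · intro t ht
    rw [Finset.mem_filter] at ht
    have htf := ht.1
    have hsub := ht.2.1
    have hcard := ht.2.2
    have h1 : (t \ σ).card = 1 := by rw [Finset.card_sdiff_of_subset hsub]; omega
    have h2 : σ ∪ t \ σ = t := Finset.union_sdiff_of_subset hsub
    refine Finset.mem_filter.2 ⟨mem_K.2 ⟨hY.2.1 htf Finset.sdiff_subset, h1⟩, ?_⟩
    rw [h2]; exact mem_K.2 ⟨htf, by omega⟩
  · intro u hu
    rw [Finset.mem_filter] at hu
    obtain ⟨hu1, hu2⟩ := hu
    obtain ⟨huf, hucard⟩ := mem_K.1 hu2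
    show σ ∪ u ∈ Y.faces.filter _
    exact Finset.mem_filter.2 ⟨huf, Finset.subset_union_left, by omega⟩
  · intro t ht
    rw [Finset.mem_filter] at ht
    exact Finset.union_sdiff_of_subset ht.2.1
  · intro u hu
    rw [Finset.mem_filter] at hu
    obtain ⟨hu1, hu2⟩ := hu
    obtain ⟨huf1, hucard1⟩ := mem_K.1 hu1
    obtain ⟨huf, hucard⟩ := mem_K.1 hu2
    have hcap : (σ ∩ u).card = 0 := by
      have := Finset.card_union_add_card_inter σ u; omega
    rw [Finset.card_eq_zero] at hcap
    exact Finset.union_sdiff_cancel_left (Finset.disjoint_iff_inter_eq_empty.2 hcap)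
  · intro t ht
    rw [Finset.mem_filter] at ht
    rw [Finset.union_sdiff_of_subset ht.2.1]

lemma m_empty_eq {Y : WSC V} {d : ℕ} (hY : Y.IsWSC d) : Y.m ∅ = ∑ v ∈ Y.K 1, Y.m v := by
  have h0 : (∅ : Finset V) ∈ Y.K 0 := mem_K.2 ⟨hY.1, Finset.card_empty⟩
  rw [m_eq_sum_compl hY h0 (Nat.zero_le d)]
  simp only [Finset.empty_union]
  rw [Finset.filter_true_of_mem (fun u hu => hu)]

lemma adj_swap {Y : WSC V} (f : Finset V → Finset V → ℝ) :
    ∑ τ ∈ Y.K 1, ∑ τ' ∈ (Y.K 1).filter (fun τ' => τ ∪ τ' ∈ Y.K 2), f τ τ'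
      = ∑ τ ∈ Y.K 1, ∑ τ' ∈ (Y.K 1).filter (fun τ' => τ ∪ τ' ∈ Y.K 2), f τ' τ := by
  simp only [Finset.sum_filter]
  rw [Finset.sum_comm]
  refine Finset.sum_congr rfl fun τ _ => Finset.sum_congr rfl fun τ' _ => ?_
  rw [Finset.union_comm]

/-- The pure quadratic form of the non-lazy upper walk on the 1-skeleton. -/
def Qf (Y : WSC V) (φ ψ : Finset V → ℝ) : ℝ :=
  ∑ τ ∈ Y.K 1, ∑ τ' ∈ (Y.K 1).filter (fun τ' => τ ∪ τ' ∈ Y.K 2), Y.m (τ ∪ τ') * (φ τ * ψ τ')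

lemma Qf_symm (Y : WSC V) (φ ψ : Finset V → ℝ) : Qf Y φ ψ = Qf Y ψ φ := by
  unfold Qf
  rw [adj_swap (f := fun τ τ' => Y.m (τ ∪ τ') * (φ τ * ψ τ'))]
  refine Finset.sum_congr rfl fun τ _ => Finset.sum_congr rfl fun τ' _ => ?_
  rw [Finset.union_comm τ' τ]; ring

lemma Mup'_apply (Y : WSC V) (φ : Finset V → ℝ) (τ : Finset V) :
    Y.Mup' 1 φ τ
      = ∑ τ' ∈ (Y.K 1).filter (fun τ' => τ ∪ τ' ∈ Y.K 2), Y.m (τ ∪ τ') / Y.m τ * φ τ' := by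
  unfold Mup' Mup
  push_cast
  rw [mul_add, Finset.mul_sum]
  have h1 : ((1:ℝ) + 1) / 1 * (1 / (1 + 1) * φ τ) - 1 / 1 * φ τ = 0 := by ring
  have h2 : ∀ τ' : Finset V, ((1:ℝ) + 1) / 1 * (Y.m (τ ∪ τ') / ((1 + 1) * Y.m τ) * φ τ')
      = Y.m (τ ∪ τ') / Y.m τ * φ τ' := by
    intro τ'
    rw [div_mul_eq_div_div_swap]
    ring
  calc ((1:ℝ) + 1) / 1 * (1 / (1 + 1) * φ τ)
        + (∑ τ' ∈ (Y.K 1).filter (fun τ' => τ ∪ τ' ∈ Y.K 2),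
            ((1:ℝ) + 1) / 1 * (Y.m (τ ∪ τ') / ((1 + 1) * Y.m τ) * φ τ')) - 1 / 1 * φ τ
      = ∑ τ' ∈ (Y.K 1).filter (fun τ' => τ ∪ τ' ∈ Y.K 2),
          ((1:ℝ) + 1) / 1 * (Y.m (τ ∪ τ') / ((1 + 1) * Y.m τ) * φ τ') := by linarith [h1]
    _ = _ := Finset.sum_congr rfl fun τ' _ => h2 τ'

lemma inn_comm (Y : WSC V) (c : ℕ) (φ ψ : Finset V → ℝ) : Y.inn c φ ψ = Y.inn c ψ φ :=
  Finset.sum_congr rfl fun σ _ => by ring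

lemma inn_Mup' {Y : WSC V} {d : ℕ} (hY : Y.IsWSC d) (φ ψ : Finset V → ℝ) :
    Y.inn 1 (Y.Mup' 1 φ) ψ = Qf Y ψ φ := by
  unfold inn Qf
  refine Finset.sum_congr rfl fun τ hτ => ?_
  have hne : Y.m τ ≠ 0 := ne_of_gt (m_pos hY hτ)
  rw [Mup'_apply Y φ τ, Finset.sum_mul, Finset.mul_sum]
  refine Finset.sum_congr rfl fun τ' _ => ?_
  field_simp

end WSC

namespace WSC

variable {V : Type*} [DecidableEq V]

lemma mem_link_faces {Y : WSC V} {τ η : Finset V} :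
    η ∈ (Y.link τ).faces ↔ η ∈ Y.faces ∧ η ∩ τ = ∅ ∧ τ ∪ η ∈ Y.faces := by
  unfold link
  rw [Finset.mem_filter]

lemma link_m (Y : WSC V) (τ η : Finset V) : (Y.link τ).m η = Y.m (τ ∪ η) := rfl

lemma link_isWSC {Y : WSC V} {d c : ℕ} (hY : Y.IsWSC d) {τ : Finset V} (hτ : τ ∈ Y.K c)
    (hcd : c ≤ d) : (Y.link τ).IsWSC (d - c) := by
  obtain ⟨hτf, hτc⟩ := mem_K.1 hτ
  obtain ⟨hemp, hdc, hcard, hpure, hpos, hwt⟩ := hY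
  refine ⟨?_, ?_, ?_, ?_, ?_, ?_⟩
  · exact mem_link_faces.2 ⟨hemp, Finset.empty_inter τ, by rwa [Finset.union_empty]⟩
  · intro σ η hσ hsub
    obtain ⟨h1, h2, h3⟩ := mem_link_faces.1 hσ
    refine mem_link_faces.2 ⟨hdc h1 hsub, ?_, hdc h3 (Finset.union_subset_union_right hsub)⟩
    have h4 : η ∩ τ ⊆ σ ∩ τ := Finset.inter_subset_inter hsub subset_rfl
    rw [h2] at h4
    exact Finset.subset_empty.1 h4
  · intro η hη
    obtain ⟨h1, h2, h3⟩ := mem_link_faces.1 hη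
    have hd : Disjoint τ η := by
      rw [Finset.disjoint_iff_inter_eq_empty, Finset.inter_comm]; exact h2
    have h5 := hcard h3
    rw [Finset.card_union_of_disjoint hd] at h5
    omega
  · intro η hη
    obtain ⟨h1, h2, h3⟩ := mem_link_faces.1 hη
    obtain ⟨σt, hσtf, hσsub, hσcard⟩ := hpure h3
    have hτsub : τ ⊆ σt := Finset.subset_union_left.trans hσsub
    refine ⟨σt \ τ, ?_, ?_, ?_⟩
    · refine mem_link_faces.2 ⟨hdc hσtf Finset.sdiff_subset, Finset.sdiff_inter_self τ σt, ?_⟩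
      rwa [Finset.union_sdiff_of_subset hτsub]
    · refine Finset.subset_sdiff.2 ⟨(Finset.subset_union_right).trans hσsub, ?_⟩
      rw [Finset.disjoint_iff_inter_eq_empty]; exact h2
    · rw [Finset.card_sdiff_of_subset hτsub]; omega
  · intro η hη
    obtain ⟨h1, h2, h3⟩ := mem_link_faces.1 hη
    exact hpos h3
  · intro η hη hηcard
    obtain ⟨h1, h2, h3⟩ := mem_link_faces.1 hη
    have hdisj : Disjoint τ η := by
      rw [Finset.disjoint_iff_inter_eq_empty, Finset.inter_comm]; exact h2
    have hcardu : (τ ∪ η).card = c + η.card := by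
      rw [Finset.card_union_of_disjoint hdisj, hτc]
    rw [link_m, hwt h3 (by omega)]
    refine Finset.sum_nbij' (fun t => t \ τ) (fun σ => τ ∪ σ) ?_ ?_ ?_ ?_ ?_
    · intro t ht
      rw [Finset.mem_filter] at ht
      have htf := ht.1
      have hsub := ht.2.1
      have hcardt := ht.2.2
      have hτt : τ ⊆ t := Finset.subset_union_left.trans hsub
      show t \ τ ∈ Finset.filter _ _
      refine Finset.mem_filter.2 ⟨?_, ?_, ?_⟩
      · refine mem_link_faces.2 ⟨hdc htf Finset.sdiff_subset, Finset.sdiff_inter_self τ t, ?_⟩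
        rwa [Finset.union_sdiff_of_subset hτt]
      · refine Finset.subset_sdiff.2 ⟨(Finset.subset_union_right).trans hsub, hdisj.symm.mono_left ?_⟩
        exact subset_rfl
      · rw [Finset.card_sdiff_of_subset hτt]; omega
    · intro σ hσ
      rw [Finset.mem_filter] at hσ
      obtain ⟨hσl, hσsub, hσc⟩ := hσ
      obtain ⟨g1, g2, g3⟩ := mem_link_faces.1 hσl
      have hdisj2 : Disjoint τ σ := by
        rw [Finset.disjoint_iff_inter_eq_empty, Finset.inter_comm]; exact g2
      show τ ∪ σ ∈ Finset.filter _ _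
      refine Finset.mem_filter.2 ⟨g3, Finset.union_subset_union_right hσsub, ?_⟩
      rw [Finset.card_union_of_disjoint hdisj2, hτc]; omega
    · intro t ht
      rw [Finset.mem_filter] at ht
      exact Finset.union_sdiff_of_subset (Finset.subset_union_left.trans ht.2.1)
    · intro σ hσ
      rw [Finset.mem_filter] at hσ
      obtain ⟨hσl, hσsub, hσc⟩ := hσ
      obtain ⟨g1, g2, g3⟩ := mem_link_faces.1 hσl
      have hdisj2 : Disjoint τ σ := by
        rw [Finset.disjoint_iff_inter_eq_empty, Finset.inter_comm]; exact g2
      exact Finset.union_sdiff_cancel_left hdisj2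
    · intro t ht
      rw [Finset.mem_filter] at ht
      have hτt : τ ⊆ t := Finset.subset_union_left.trans ht.2.1
      rw [link_m, Finset.union_sdiff_of_subset hτt]

lemma mem_link_K {Y : WSC V} {d : ℕ} (hY : Y.IsWSC d) {u : Finset V} (hu : u ∈ Y.K 1)
    {σ : Finset V} {c : ℕ} : σ ∈ (Y.link u).K c ↔ σ ∈ Y.K c ∧ u ∪ σ ∈ Y.K (c + 1) := by
  obtain ⟨huf, huc⟩ := mem_K.1 hu
  constructor
  · intro h
    obtain ⟨hl, hc⟩ := mem_K.1 h
    obtain ⟨h1, h2, h3⟩ := mem_link_faces.1 hl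
    have hdisj : Disjoint u σ := by
      rw [Finset.disjoint_iff_inter_eq_empty, Finset.inter_comm]; exact h2
    exact ⟨mem_K.2 ⟨h1, hc⟩, mem_K.2 ⟨h3, by rw [Finset.card_union_of_disjoint hdisj]; omega⟩⟩
  · rintro ⟨h1, h2⟩
    obtain ⟨h1f, h1c⟩ := mem_K.1 h1
    obtain ⟨h2f, h2c⟩ := mem_K.1 h2
    have hcap : (u ∩ σ).card = 0 := by
      have := Finset.card_union_add_card_inter u σ; omega
    rw [Finset.card_eq_zero] at hcap
    refine mem_K.2 ⟨mem_link_faces.2 ⟨h1f, by rw [Finset.inter_comm]; exact hcap, h2f⟩, h1c⟩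

lemma link_K1_eq {Y : WSC V} {d : ℕ} (hY : Y.IsWSC d) {u : Finset V} (hu : u ∈ Y.K 1) :
    (Y.link u).K 1 = (Y.K 1).filter (fun v => u ∪ v ∈ Y.K 2) := by
  ext v
  rw [mem_link_K hY hu, Finset.mem_filter]

lemma link_link {Y : WSC V} {d : ℕ} (hY : Y.IsWSC d) {τ u : Finset V}
    (hu : u ∈ (Y.link τ).faces) : (Y.link τ).link u = Y.link (τ ∪ u) := by
  obtain ⟨huf, huτ, hτu⟩ := mem_link_faces.1 hu
  have hdc := hY.2.1
  have hext : ∀ (A B : WSC V), A.faces = B.faces → A.m = B.m → A = B := by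
    intro A B hf hm; cases A; cases B; cases hf; cases hm; rfl
  refine hext _ _ ?_ ?_
  · ext η
    simp only [mem_link_faces]
    constructor
    · rintro ⟨⟨h1, h2, h3⟩, h4, h5, h6, h7⟩
      refine ⟨h1, ?_, ?_⟩
      · rw [Finset.inter_union_distrib_left, h2, h4, Finset.union_empty]
      · rw [Finset.union_assoc]; exact h7
    · rintro ⟨h1, h2, h3⟩
      have hητ : η ∩ τ = ∅ := by
        have h4 : η ∩ τ ⊆ η ∩ (τ ∪ u) :=
          Finset.inter_subset_inter subset_rfl Finset.subset_union_left
        rw [h2] at h4; exact Finset.subset_empty.1 h4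
      have hηu : η ∩ u = ∅ := by
        have h4 : η ∩ u ⊆ η ∩ (τ ∪ u) :=
          Finset.inter_subset_inter subset_rfl Finset.subset_union_right
        rw [h2] at h4; exact Finset.subset_empty.1 h4
      refine ⟨⟨h1, hητ, hdc h3 ?_⟩, hηu, hdc h3 ?_, ?_, ?_⟩
      · exact Finset.union_subset_union_left Finset.subset_union_left
      · rw [Finset.union_assoc]
        exact Finset.subset_union_right
      · rw [Finset.union_inter_distrib_right, huτ, hητ, Finset.union_empty]
      · rw [← Finset.union_assoc]; exact h3
  · funext η
    show Y.m (τ ∪ (u ∪ η)) = Y.m (τ ∪ u ∪ η)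
    rw [Finset.union_assoc]

end WSC

namespace WSC

variable {V : Type*} [DecidableEq V]

lemma sum_adj_left {Z : WSC V} {e : ℕ} (hZ : Z.IsWSC e) (he : 1 ≤ e) (f : Finset V → ℝ) :
    ∑ τ ∈ Z.K 1, ∑ τ' ∈ (Z.K 1).filter (fun τ' => τ ∪ τ' ∈ Z.K 2), Z.m (τ ∪ τ') * f τ
      = ∑ τ ∈ Z.K 1, Z.m τ * f τ := by
  refine Finset.sum_congr rfl fun τ hτ => ?_
  rw [← Finset.sum_mul, ← m_eq_sum_compl hZ hτ he]

lemma sum_adj_right {Z : WSC V} {e : ℕ} (hZ : Z.IsWSC e) (he : 1 ≤ e) (f : Finset V → ℝ) :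
    ∑ τ ∈ Z.K 1, ∑ τ' ∈ (Z.K 1).filter (fun τ' => τ ∪ τ' ∈ Z.K 2), Z.m (τ ∪ τ') * f τ'
      = ∑ τ ∈ Z.K 1, Z.m τ * f τ := by
  rw [adj_swap (f := fun τ τ' => Z.m (τ ∪ τ') * f τ')]
  rw [← sum_adj_left hZ he f]
  refine Finset.sum_congr rfl fun τ _ => Finset.sum_congr rfl fun τ' _ => ?_
  rw [Finset.union_comm τ' τ]

lemma sum_adj_m {Z : WSC V} {e : ℕ} (hZ : Z.IsWSC e) (he : 1 ≤ e) :
    ∑ τ ∈ Z.K 1, ∑ τ' ∈ (Z.K 1).filter (fun τ' => τ ∪ τ' ∈ Z.K 2), Z.m (τ ∪ τ')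
      = Z.m ∅ := by
  rw [m_empty_eq hZ]
  refine Finset.sum_congr rfl fun τ hτ => ?_
  rw [← m_eq_sum_compl hZ hτ he]

lemma mu_Mup' {Y : WSC V} {d : ℕ} (hY : Y.IsWSC d) {u : Finset V} (hu : u ∈ Y.K 1)
    (φ : Finset V → ℝ) :
    Y.m u * Y.Mup' 1 φ u
      = ∑ τ' ∈ (Y.K 1).filter (fun τ' => u ∪ τ' ∈ Y.K 2), Y.m (u ∪ τ') * φ τ' := by
  have hne : Y.m u ≠ 0 := ne_of_gt (m_pos hY hu)
  rw [Mup'_apply, Finset.mul_sum]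
  refine Finset.sum_congr rfl fun τ' _ => ?_
  field_simp

lemma Mup'_orth {Y : WSC V} {d : ℕ} (hY : Y.IsWSC d) (hd : 1 ≤ d) (φ : Finset V → ℝ)
    (hz : ∑ σ ∈ Y.K 1, Y.m σ * φ σ = 0) :
    ∑ σ ∈ Y.K 1, Y.m σ * Y.Mup' 1 φ σ = 0 := by
  rw [Finset.sum_congr rfl fun σ hσ => mu_Mup' hY hσ φ, sum_adj_right hY hd φ, hz]

lemma link_sum_m {Y : WSC V} {d : ℕ} (hY : Y.IsWSC d) (hd : 1 ≤ d) {u : Finset V}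
    (hu : u ∈ Y.K 1) : ∑ v ∈ (Y.link u).K 1, (Y.link u).m v = Y.m u := by
  rw [← m_empty_eq (link_isWSC hY hu hd), link_m, Finset.union_empty]

lemma link_sum_vertex {Y : WSC V} {d : ℕ} (hY : Y.IsWSC d) {u : Finset V} (hu : u ∈ Y.K 1)
    (φ : Finset V → ℝ) :
    ∑ v ∈ (Y.link u).K 1, (Y.link u).m v * φ v = Y.m u * Y.Mup' 1 φ u := by
  rw [link_K1_eq hY hu, mu_Mup' hY hu φ]
  exact Finset.sum_congr rfl fun v _ => rfl

lemma normSq_nonneg {Z : WSC V} {e : ℕ} (hZ : Z.IsWSC e) (c : ℕ) (φ : Finset V → ℝ) :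
    0 ≤ Z.normSq c φ :=
  Finset.sum_nonneg fun σ hσ => mul_nonneg (m_pos hZ hσ).le (mul_self_nonneg _)

lemma normSq_eq_zero {Z : WSC V} {e : ℕ} (hZ : Z.IsWSC e) {c : ℕ} {φ : Finset V → ℝ}
    (h : Z.normSq c φ = 0) : ∀ σ ∈ Z.K c, φ σ = 0 := by
  intro σ hσ
  have h1 := (Finset.sum_eq_zero_iff_of_nonneg
    (fun σ hσ => mul_nonneg (m_pos hZ hσ).le (mul_self_nonneg (φ σ)))).1 h σ hσ
  have h2 := m_pos hZ hσ
  have h3 : φ σ * φ σ = 0 := by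
    rcases mul_eq_zero.1 h1 with h | h
    · exact absurd h (ne_of_gt h2)
    · exact h
  exact mul_self_eq_zero.1 h3

lemma normSq_pos {Z : WSC V} {e : ℕ} (hZ : Z.IsWSC e) {c : ℕ} {φ : Finset V → ℝ}
    (h : Z.normSq c φ ≠ 0) : 0 < Z.normSq c φ :=
  lt_of_le_of_ne (normSq_nonneg hZ c φ) (Ne.symm h)

lemma inn_zero_right {Z : WSC V} {c : ℕ} {ψ : Finset V → ℝ}
    (h : ∀ σ ∈ Z.K c, ψ σ = 0) (θ : Finset V → ℝ) : Z.inn c θ ψ = 0 :=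
  Finset.sum_eq_zero fun σ hσ => by rw [h σ hσ]; ring

lemma Qf_zero {Z : WSC V} {φ : Finset V → ℝ} (h : ∀ σ ∈ Z.K 1, φ σ = 0) :
    Qf Z φ φ = 0 :=
  Finset.sum_eq_zero fun τ hτ => Finset.sum_eq_zero fun τ' _ => by rw [h τ hτ]; ring

lemma Q_decomp {Z : WSC V} {e : ℕ} (hZ : Z.IsWSC e) (he : 1 ≤ e) (φ : Finset V → ℝ) (c : ℝ)
    (horth : ∑ v ∈ Z.K 1, Z.m v * (φ v - c) = 0) :
    Qf Z φ φ = Qf Z (fun σ => φ σ - c) (fun σ => φ σ - c) + c ^ 2 * Z.m ∅ := by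
  have key : ∀ τ τ' : Finset V, Z.m (τ ∪ τ') * (φ τ * φ τ')
      = Z.m (τ ∪ τ') * ((φ τ - c) * (φ τ' - c)) + (c * (Z.m (τ ∪ τ') * (φ τ - c))
        + (c * (Z.m (τ ∪ τ') * (φ τ' - c)) + c ^ 2 * Z.m (τ ∪ τ'))) := by
    intro τ τ'; ring
  unfold Qf
  simp only [key, Finset.sum_add_distrib, ← Finset.mul_sum]
  rw [sum_adj_left hZ he (fun τ => φ τ - c), sum_adj_right hZ he (fun τ => φ τ - c),
    sum_adj_m hZ he, horth]
  ring

lemma normSq_decomp {Z : WSC V} {e : ℕ} (hZ : Z.IsWSC e) (φ : Finset V → ℝ) (c : ℝ)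
    (horth : ∑ v ∈ Z.K 1, Z.m v * (φ v - c) = 0) :
    Z.normSq 1 φ = Z.normSq 1 (fun σ => φ σ - c) + c ^ 2 * Z.m ∅ := by
  have key : ∀ σ : Finset V, Z.m σ * (φ σ * φ σ)
      = Z.m σ * ((φ σ - c) * (φ σ - c)) + (2 * c * (Z.m σ * (φ σ - c)) + c ^ 2 * Z.m σ) := by
    intro σ; ring
  unfold normSq inn
  simp only [key, Finset.sum_add_distrib, ← Finset.mul_sum]
  rw [horth, ← m_empty_eq hZ]
  ring

lemma sum_link_normSq {Y : WSC V} {d : ℕ} (hY : Y.IsWSC d) (hd : 1 ≤ d) (φ : Finset V → ℝ) :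
    ∑ u ∈ Y.K 1, (Y.link u).normSq 1 φ = Y.normSq 1 φ := by
  unfold normSq inn
  have h1 : ∀ u ∈ Y.K 1, ∑ v ∈ (Y.link u).K 1, (Y.link u).m v * (φ v * φ v)
      = ∑ v ∈ (Y.K 1).filter (fun v => u ∪ v ∈ Y.K 2), Y.m (u ∪ v) * (φ v * φ v) := by
    intro u hu
    rw [link_K1_eq hY hu]
    exact Finset.sum_congr rfl fun v _ => rfl
  rw [Finset.sum_congr rfl h1, sum_adj_right hY hd (fun v => φ v * φ v)]

lemma cond_iff {Y : WSC V} {d : ℕ} (hY : Y.IsWSC d) {u v w : Finset V} (hu : u ∈ Y.K 1)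
    (hv : v ∈ Y.K 1) (hw : w ∈ Y.K 1) :
    (u ∪ v ∈ Y.K 2 ∧ u ∪ w ∈ Y.K 2 ∧ v ∪ w ∈ (Y.link u).K 2)
      ↔ (v ∪ w ∈ Y.K 2 ∧ (v ∪ w) ∪ u ∈ Y.K 3) := by
  constructor
  · rintro ⟨-, -, h3⟩
    obtain ⟨h4, h5⟩ := (mem_link_K hY hu).1 h3
    exact ⟨h4, by rwa [Finset.union_comm u (v ∪ w)] at h5⟩
  · rintro ⟨h1, h2⟩
    obtain ⟨hvwf, hvwc⟩ := mem_K.1 h1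
    obtain ⟨h2f, h2c⟩ := mem_K.1 h2
    obtain ⟨hvf, hvc⟩ := mem_K.1 hv
    obtain ⟨hwf, hwc⟩ := mem_K.1 hw
    obtain ⟨huf, huc⟩ := mem_K.1 hu
    have hcap : ((v ∪ w) ∩ u).card = 0 := by
      have := Finset.card_union_add_card_inter (v ∪ w) u; omega
    rw [Finset.card_eq_zero] at hcap
    have hvu : u ∩ v = ∅ := by
      have hs : u ∩ v ⊆ (v ∪ w) ∩ u := by
        rw [Finset.inter_comm]
        exact Finset.inter_subset_inter Finset.subset_union_left subset_rfl
      rw [hcap] at hs; exact Finset.subset_empty.1 hs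
    have hwu : u ∩ w = ∅ := by
      have hs : u ∩ w ⊆ (v ∪ w) ∩ u := by
        rw [Finset.inter_comm]
        exact Finset.inter_subset_inter Finset.subset_union_right subset_rfl
      rw [hcap] at hs; exact Finset.subset_empty.1 hs
    have hdc := hY.2.1
    refine ⟨?_, ?_, ?_⟩
    · refine mem_K.2 ⟨hdc h2f ?_, ?_⟩
      · exact Finset.union_subset (Finset.subset_union_right)
          (Finset.subset_union_left.trans Finset.subset_union_left)
      · rw [Finset.card_union_of_disjoint (Finset.disjoint_iff_inter_eq_empty.2 hvu)]
        omega
    · refine mem_K.2 ⟨hdc h2f ?_, ?_⟩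
      · exact Finset.union_subset (Finset.subset_union_right)
          (Finset.subset_union_right.trans Finset.subset_union_left)
      · rw [Finset.card_union_of_disjoint (Finset.disjoint_iff_inter_eq_empty.2 hwu)]
        omega
    · exact (mem_link_K hY hu).2 ⟨h1, by rwa [Finset.union_comm]⟩

lemma sum_link_Q {Y : WSC V} {d : ℕ} (hY : Y.IsWSC d) (hd : 2 ≤ d) (φ : Finset V → ℝ) :
    ∑ u ∈ Y.K 1, Qf (Y.link u) φ φ = Qf Y φ φ := by
  unfold Qf
  have step1 : ∀ u ∈ Y.K 1,
      (∑ v ∈ (Y.link u).K 1, ∑ w ∈ ((Y.link u).K 1).filter (fun w => v ∪ w ∈ (Y.link u).K 2),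
        (Y.link u).m (v ∪ w) * (φ v * φ w))
      = ∑ v ∈ Y.K 1, ∑ w ∈ Y.K 1,
          if v ∪ w ∈ Y.K 2 ∧ (v ∪ w) ∪ u ∈ Y.K 3 then Y.m ((v ∪ w) ∪ u) * (φ v * φ w)
          else 0 := by
    intro u hu
    rw [link_K1_eq hY hu]
    simp only [Finset.filter_filter, Finset.sum_filter]
    refine Finset.sum_congr rfl fun v hv => ?_
    by_cases hP : u ∪ v ∈ Y.K 2
    · rw [if_pos hP]
      refine Finset.sum_congr rfl fun w hw => ?_
      by_cases hR : v ∪ w ∈ Y.K 2 ∧ (v ∪ w) ∪ u ∈ Y.K 3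
      · have hQ := ((cond_iff hY hu hv hw).2 hR).2
        rw [if_pos hQ, if_pos hR, link_m, Finset.union_comm u (v ∪ w)]
      · rw [if_neg (fun hQ => hR ((cond_iff hY hu hv hw).1 ⟨hP, hQ⟩)), if_neg hR]
    · rw [if_neg hP]
      symm
      refine Finset.sum_eq_zero fun w hw => ?_
      exact if_neg (fun hR => hP ((cond_iff hY hu hv hw).2 hR).1)
  rw [Finset.sum_congr rfl step1, Finset.sum_comm]
  refine Finset.sum_congr rfl fun v _ => ?_
  rw [Finset.sum_comm, Finset.sum_filter]
  refine Finset.sum_congr rfl fun w _ => ?_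
  by_cases hA : v ∪ w ∈ Y.K 2
  · rw [if_pos hA]
    have h2 : ∀ u : Finset V,
        (if v ∪ w ∈ Y.K 2 ∧ (v ∪ w) ∪ u ∈ Y.K 3 then Y.m ((v ∪ w) ∪ u) * (φ v * φ w) else 0)
        = (if (v ∪ w) ∪ u ∈ Y.K 3 then Y.m ((v ∪ w) ∪ u) else 0) * (φ v * φ w) := by
      intro u
      by_cases hB : (v ∪ w) ∪ u ∈ Y.K 3
      · rw [if_pos ⟨hA, hB⟩, if_pos hB]
      · rw [if_neg (fun h => hB h.2), if_neg hB, zero_mul]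
    rw [Finset.sum_congr rfl fun u _ => h2 u, ← Finset.sum_mul, ← Finset.sum_filter,
      ← m_eq_sum_compl hY hA hd]
  · rw [if_neg hA]
    exact Finset.sum_eq_zero fun u _ => if_neg (fun h => hA h.1)

end WSC

namespace WSC

variable {V : Type*} [DecidableEq V]

lemma sq_diff_identity {Z : WSC V} {e : ℕ} (hZ : Z.IsWSC e) (he : 1 ≤ e) (φ : Finset V → ℝ) :
    ∑ τ ∈ Z.K 1, ∑ τ' ∈ (Z.K 1).filter (fun τ' => τ ∪ τ' ∈ Z.K 2),
        Z.m (τ ∪ τ') * (φ τ - φ τ') ^ 2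
      = 2 * Z.normSq 1 φ - 2 * Qf Z φ φ := by
  have key : ∀ τ τ' : Finset V, Z.m (τ ∪ τ') * (φ τ - φ τ') ^ 2
      = Z.m (τ ∪ τ') * (φ τ * φ τ) + (Z.m (τ ∪ τ') * (φ τ' * φ τ')
        - 2 * (Z.m (τ ∪ τ') * (φ τ * φ τ')))  := by intro τ τ'; ring
  simp only [key, Finset.sum_add_distrib, Finset.sum_sub_distrib, ← Finset.mul_sum]
  rw [sum_adj_left hZ he (fun τ => φ τ * φ τ), sum_adj_right hZ he (fun τ => φ τ * φ τ)]
  show _ = 2 * (∑ σ ∈ Z.K 1, Z.m σ * (φ σ * φ σ)) - 2 * Qf Z φ φ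
  unfold Qf
  ring

lemma sq_add_identity {Z : WSC V} {e : ℕ} (hZ : Z.IsWSC e) (he : 1 ≤ e) (φ : Finset V → ℝ) :
    ∑ τ ∈ Z.K 1, ∑ τ' ∈ (Z.K 1).filter (fun τ' => τ ∪ τ' ∈ Z.K 2),
        Z.m (τ ∪ τ') * (φ τ + φ τ') ^ 2
      = 2 * Z.normSq 1 φ + 2 * Qf Z φ φ := by
  have key : ∀ τ τ' : Finset V, Z.m (τ ∪ τ') * (φ τ + φ τ') ^ 2
      = Z.m (τ ∪ τ') * (φ τ * φ τ) + (Z.m (τ ∪ τ') * (φ τ' * φ τ')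
        + 2 * (Z.m (τ ∪ τ') * (φ τ * φ τ')))  := by intro τ τ'; ring
  simp only [key, Finset.sum_add_distrib, ← Finset.mul_sum]
  rw [sum_adj_left hZ he (fun τ => φ τ * φ τ), sum_adj_right hZ he (fun τ => φ τ * φ τ)]
  show _ = 2 * (∑ σ ∈ Z.K 1, Z.m σ * (φ σ * φ σ)) + 2 * Qf Z φ φ
  unfold Qf
  ring

lemma pair_sum_nonneg {Z : WSC V} {e : ℕ} (hZ : Z.IsWSC e)
    (g : Finset V → Finset V → ℝ) (hg : ∀ τ τ', 0 ≤ g τ τ') :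
    0 ≤ ∑ τ ∈ Z.K 1, ∑ τ' ∈ (Z.K 1).filter (fun τ' => τ ∪ τ' ∈ Z.K 2),
        Z.m (τ ∪ τ') * g τ τ' := by
  refine Finset.sum_nonneg fun τ _ => Finset.sum_nonneg fun τ' hτ' => ?_
  have h2 : τ ∪ τ' ∈ Z.K 2 := (Finset.mem_filter.1 hτ').2
  exact mul_nonneg (m_pos hZ h2).le (hg τ τ')

lemma Q_le_normSq {Z : WSC V} {e : ℕ} (hZ : Z.IsWSC e) (he : 1 ≤ e) (φ : Finset V → ℝ) :
    Qf Z φ φ ≤ Z.normSq 1 φ := by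
  have h := pair_sum_nonneg hZ (fun τ τ' => (φ τ - φ τ') ^ 2) (fun τ τ' => sq_nonneg _)
  rw [sq_diff_identity hZ he φ] at h
  linarith

lemma neg_normSq_le_Q {Z : WSC V} {e : ℕ} (hZ : Z.IsWSC e) (he : 1 ≤ e) (φ : Finset V → ℝ) :
    -Z.normSq 1 φ ≤ Qf Z φ φ := by
  have h := pair_sum_nonneg hZ (fun τ τ' => (φ τ + φ τ') ^ 2) (fun τ τ' => sq_nonneg _)
  rw [sq_add_identity hZ he φ] at h
  linarith

lemma inn_sq_le {Z : WSC V} {e : ℕ} (hZ : Z.IsWSC e) (φ ψ : Finset V → ℝ) :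
    (Z.inn 1 φ ψ) ^ 2 ≤ Z.normSq 1 φ * Z.normSq 1 ψ := by
  have h := Finset.sum_mul_sq_le_sq_mul_sq (Z.K 1)
    (fun σ => Real.sqrt (Z.m σ) * φ σ) (fun σ => Real.sqrt (Z.m σ) * ψ σ)
  have e1 : ∑ σ ∈ Z.K 1, (Real.sqrt (Z.m σ) * φ σ) * (Real.sqrt (Z.m σ) * ψ σ)
      = Z.inn 1 φ ψ := by
    refine Finset.sum_congr rfl fun σ hσ => ?_
    have : Real.sqrt (Z.m σ) * Real.sqrt (Z.m σ) = Z.m σ := Real.mul_self_sqrt (m_pos hZ hσ).le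
    calc (Real.sqrt (Z.m σ) * φ σ) * (Real.sqrt (Z.m σ) * ψ σ)
        = Real.sqrt (Z.m σ) * Real.sqrt (Z.m σ) * (φ σ * ψ σ) := by ring
      _ = Z.m σ * (φ σ * ψ σ) := by rw [this]
  have e2 : ∑ σ ∈ Z.K 1, (Real.sqrt (Z.m σ) * φ σ) ^ 2 = Z.normSq 1 φ := by
    refine Finset.sum_congr rfl fun σ hσ => ?_
    have : Real.sqrt (Z.m σ) * Real.sqrt (Z.m σ) = Z.m σ := Real.mul_self_sqrt (m_pos hZ hσ).le
    calc (Real.sqrt (Z.m σ) * φ σ) ^ 2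
        = Real.sqrt (Z.m σ) * Real.sqrt (Z.m σ) * (φ σ * φ σ) := by ring
      _ = Z.m σ * (φ σ * φ σ) := by rw [this]
  have e3 : ∑ σ ∈ Z.K 1, (Real.sqrt (Z.m σ) * ψ σ) ^ 2 = Z.normSq 1 ψ := by
    refine Finset.sum_congr rfl fun σ hσ => ?_
    have : Real.sqrt (Z.m σ) * Real.sqrt (Z.m σ) = Z.m σ := Real.mul_self_sqrt (m_pos hZ hσ).le
    calc (Real.sqrt (Z.m σ) * ψ σ) ^ 2
        = Real.sqrt (Z.m σ) * Real.sqrt (Z.m σ) * (ψ σ * ψ σ) := by ring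
      _ = Z.m σ * (ψ σ * ψ σ) := by rw [this]
  rw [e1, e2, e3] at h
  exact h

lemma normSq_Mup'_eq {Y : WSC V} (φ : Finset V → ℝ) :
    Y.normSq 1 (Y.Mup' 1 φ) = ∑ u ∈ Y.K 1, Y.m u * (Y.Mup' 1 φ u) ^ 2 :=
  Finset.sum_congr rfl fun u _ => by ring

lemma loc_decomp {Y : WSC V} {d : ℕ} (hY : Y.IsWSC d) (hd : 2 ≤ d) (φ : Finset V → ℝ)
    {u : Finset V} (hu : u ∈ Y.K 1) :
    (∑ v ∈ (Y.link u).K 1, (Y.link u).m v * (φ v - Y.Mup' 1 φ u) = 0)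
    ∧ Qf (Y.link u) φ φ
        = Qf (Y.link u) (fun σ => φ σ - Y.Mup' 1 φ u) (fun σ => φ σ - Y.Mup' 1 φ u)
          + (Y.Mup' 1 φ u) ^ 2 * Y.m u
    ∧ (Y.link u).normSq 1 φ
        = (Y.link u).normSq 1 (fun σ => φ σ - Y.Mup' 1 φ u) + (Y.Mup' 1 φ u) ^ 2 * Y.m u := by
  have hd1 : 1 ≤ d := by omega
  have hlink : (Y.link u).IsWSC (d - 1) := link_isWSC hY hu hd1
  have he : 1 ≤ d - 1 := by omega
  have horth : ∑ v ∈ (Y.link u).K 1, (Y.link u).m v * (φ v - Y.Mup' 1 φ u) = 0 := by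
    have h1 : ∑ v ∈ (Y.link u).K 1, (Y.link u).m v * (φ v - Y.Mup' 1 φ u)
        = (∑ v ∈ (Y.link u).K 1, (Y.link u).m v * φ v)
          - (∑ v ∈ (Y.link u).K 1, (Y.link u).m v) * Y.Mup' 1 φ u := by
      rw [Finset.sum_mul, ← Finset.sum_sub_distrib]
      exact Finset.sum_congr rfl fun v _ => by ring
    rw [h1, link_sum_vertex hY hu φ, link_sum_m hY hd1 hu]
    ring
  have hm0 : (Y.link u).m ∅ = Y.m u := by rw [link_m, Finset.union_empty]
  refine ⟨horth, ?_, ?_⟩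
  · rw [Q_decomp hlink he φ (Y.Mup' 1 φ u) horth, hm0]
  · rw [normSq_decomp hlink φ (Y.Mup' 1 φ u) horth, hm0]

lemma loc_bound_upper {Y : WSC V} {d : ℕ} (hY : Y.IsWSC d) (hd : 2 ≤ d) (μ0 : ℝ)
    (φ : Finset V → ℝ)
    (hloc : ∀ u ∈ Y.K 1, ∀ ψ : Finset V → ℝ,
      (∑ v ∈ (Y.link u).K 1, (Y.link u).m v * ψ v) = 0 →
      Qf (Y.link u) ψ ψ ≤ μ0 * (Y.link u).normSq 1 ψ) :
    Qf Y φ φ ≤ Y.normSq 1 (Y.Mup' 1 φ)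
      + μ0 * (Y.normSq 1 φ - Y.normSq 1 (Y.Mup' 1 φ)) := by
  have hd1 : 1 ≤ d := by omega
  have key : ∀ u ∈ Y.K 1,
      Qf (Y.link u) φ φ ≤ Y.m u * (Y.Mup' 1 φ u) ^ 2
        + μ0 * ((Y.link u).normSq 1 φ - Y.m u * (Y.Mup' 1 φ u) ^ 2) := by
    intro u hu
    obtain ⟨horth, hQd, hNd⟩ := loc_decomp hY hd φ hu
    have hψ := hloc u hu (fun σ => φ σ - Y.Mup' 1 φ u) horth
    have hNψ : (Y.link u).normSq 1 φ - Y.m u * (Y.Mup' 1 φ u) ^ 2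
        = (Y.link u).normSq 1 (fun σ => φ σ - Y.Mup' 1 φ u) := by linarith
    rw [hNψ]
    linarith
  have hsum := Finset.sum_le_sum key
  rw [sum_link_Q hY hd φ] at hsum
  have h2 : ∑ u ∈ Y.K 1, (Y.m u * (Y.Mup' 1 φ u) ^ 2
        + μ0 * ((Y.link u).normSq 1 φ - Y.m u * (Y.Mup' 1 φ u) ^ 2))
      = Y.normSq 1 (Y.Mup' 1 φ) + μ0 * (Y.normSq 1 φ - Y.normSq 1 (Y.Mup' 1 φ)) := by
    rw [Finset.sum_add_distrib, ← Finset.mul_sum, Finset.sum_sub_distrib,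
      sum_link_normSq hY hd1 φ, ← normSq_Mup'_eq]
  rw [h2] at hsum
  exact hsum

lemma loc_bound_lower {Y : WSC V} {d : ℕ} (hY : Y.IsWSC d) (hd : 2 ≤ d) (ν0 : ℝ)
    (φ : Finset V → ℝ)
    (hloc : ∀ u ∈ Y.K 1, ∀ ψ : Finset V → ℝ,
      (∑ v ∈ (Y.link u).K 1, (Y.link u).m v * ψ v) = 0 →
      ν0 * (Y.link u).normSq 1 ψ ≤ Qf (Y.link u) ψ ψ) :
    Y.normSq 1 (Y.Mup' 1 φ) + ν0 * (Y.normSq 1 φ - Y.normSq 1 (Y.Mup' 1 φ))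
      ≤ Qf Y φ φ := by
  have hd1 : 1 ≤ d := by omega
  have key : ∀ u ∈ Y.K 1,
      Y.m u * (Y.Mup' 1 φ u) ^ 2
        + ν0 * ((Y.link u).normSq 1 φ - Y.m u * (Y.Mup' 1 φ u) ^ 2)
      ≤ Qf (Y.link u) φ φ := by
    intro u hu
    obtain ⟨horth, hQd, hNd⟩ := loc_decomp hY hd φ hu
    have hψ := hloc u hu (fun σ => φ σ - Y.Mup' 1 φ u) horth
    have hNψ : (Y.link u).normSq 1 φ - Y.m u * (Y.Mup' 1 φ u) ^ 2
        = (Y.link u).normSq 1 (fun σ => φ σ - Y.Mup' 1 φ u) := by linarith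
    rw [hNψ]
    linarith
  have hsum := Finset.sum_le_sum key
  rw [sum_link_Q hY hd φ] at hsum
  have h2 : ∑ u ∈ Y.K 1, (Y.m u * (Y.Mup' 1 φ u) ^ 2
        + ν0 * ((Y.link u).normSq 1 φ - Y.m u * (Y.Mup' 1 φ u) ^ 2))
      = Y.normSq 1 (Y.Mup' 1 φ) + ν0 * (Y.normSq 1 φ - Y.normSq 1 (Y.Mup' 1 φ)) := by
    rw [Finset.sum_add_distrib, ← Finset.mul_sum, Finset.sum_sub_distrib,
      sum_link_normSq hY hd1 φ, ← normSq_Mup'_eq]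
  rw [h2] at hsum
  exact hsum

lemma normSq_Mup'_le {Y : WSC V} {d : ℕ} (hY : Y.IsWSC d) (hd : 2 ≤ d) (φ : Finset V → ℝ) :
    Y.normSq 1 (Y.Mup' 1 φ) ≤ Y.normSq 1 φ := by
  have hd1 : 1 ≤ d := by omega
  have key : ∀ u ∈ Y.K 1, Y.m u * (Y.Mup' 1 φ u) ^ 2 ≤ (Y.link u).normSq 1 φ := by
    intro u hu
    obtain ⟨horth, hQd, hNd⟩ := loc_decomp hY hd φ hu
    have h0 : 0 ≤ (Y.link u).normSq 1 (fun σ => φ σ - Y.Mup' 1 φ u) :=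
      normSq_nonneg (link_isWSC hY hu hd1) 1 _
    linarith
  have hsum := Finset.sum_le_sum key
  rw [sum_link_normSq hY hd1 φ, ← normSq_Mup'_eq] at hsum
  exact hsum

lemma Qf_expand (Y : WSC V) (f g : Finset V → ℝ) (t : ℝ) :
    Qf Y (fun σ => f σ + t * g σ) (fun σ => f σ + t * g σ)
      = Qf Y f f + t * Qf Y f g + t * Qf Y g f + t ^ 2 * Qf Y g g := by
  unfold Qf
  simp only [Finset.mul_sum, ← Finset.sum_add_distrib]
  refine Finset.sum_congr rfl fun τ _ => Finset.sum_congr rfl fun τ' _ => ?_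
  ring

lemma normSq_expand (Y : WSC V) (f g : Finset V → ℝ) (t : ℝ) :
    Y.normSq 1 (fun σ => f σ + t * g σ)
      = Y.normSq 1 f + 2 * t * Y.inn 1 f g + t ^ 2 * Y.normSq 1 g := by
  unfold normSq inn
  simp only [Finset.mul_sum, ← Finset.sum_add_distrib]
  refine Finset.sum_congr rfl fun σ _ => ?_
  ring

lemma zero_sum_expand (Y : WSC V) (f g : Finset V → ℝ) (t : ℝ)
    (hf : ∑ σ ∈ Y.K 1, Y.m σ * f σ = 0) (hg : ∑ σ ∈ Y.K 1, Y.m σ * g σ = 0) :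
    ∑ σ ∈ Y.K 1, Y.m σ * (f σ + t * g σ) = 0 := by
  have key : ∀ σ : Finset V, Y.m σ * (f σ + t * g σ)
      = Y.m σ * f σ + t * (Y.m σ * g σ) := by intro σ; ring
  simp only [key, Finset.sum_add_distrib, ← Finset.mul_sum, hf, hg]
  ring

lemma quad_coeff_zero {a b : ℝ} (h : ∀ t : ℝ, 0 ≤ a * t ^ 2 + b * t) : b = 0 := by
  by_contra hb
  rcases le_or_gt a 0 with ha | ha
  · have h1 := h (-b)
    have hb2 : 0 < b ^ 2 := by positivity
    nlinarith [hb2, mul_nonpos_of_nonpos_of_nonneg ha (sq_nonneg b)]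
  · have h1 := h (-(b / (2 * a)))
    have h2 : a * (-(b / (2 * a))) ^ 2 + b * (-(b / (2 * a))) = -(b ^ 2 / (4 * a)) := by
      field_simp
      ring
    rw [h2] at h1
    have h3 : 0 < b ^ 2 / (4 * a) := by positivity
    linarith

end WSC

namespace WSC

variable {V : Type*} [DecidableEq V]

/-- Extension of a vector indexed by vertices to a cochain. -/
def extFn (Y : WSC V) (x : {σ : Finset V // σ ∈ Y.K 1} → ℝ) : Finset V → ℝ :=
  fun σ => if h : σ ∈ Y.K 1 then x ⟨σ, h⟩ else 0

lemma extFn_continuous_apply (Y : WSC V) (σ : Finset V) :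
    Continuous fun x : {σ : Finset V // σ ∈ Y.K 1} → ℝ => extFn Y x σ := by
  unfold extFn
  by_cases h : σ ∈ Y.K 1
  · simp only [dif_pos h]
    exact continuous_apply _
  · simp only [dif_neg h]
    exact continuous_const

lemma normSq_extFn_continuous (Y : WSC V) :
    Continuous fun x : {σ : Finset V // σ ∈ Y.K 1} → ℝ => Y.normSq 1 (extFn Y x) := by
  show Continuous fun x : {σ : Finset V // σ ∈ Y.K 1} → ℝ =>
    ∑ σ ∈ Y.K 1, Y.m σ * (extFn Y x σ * extFn Y x σ)
  exact continuous_finset_sum _ fun σ _ =>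
    continuous_const.mul ((extFn_continuous_apply Y σ).mul (extFn_continuous_apply Y σ))

lemma lin_extFn_continuous (Y : WSC V) :
    Continuous fun x : {σ : Finset V // σ ∈ Y.K 1} → ℝ =>
      ∑ σ ∈ Y.K 1, Y.m σ * extFn Y x σ :=
  continuous_finset_sum _ fun σ _ => continuous_const.mul (extFn_continuous_apply Y σ)

lemma Qf_extFn_continuous (Y : WSC V) :
    Continuous fun x : {σ : Finset V // σ ∈ Y.K 1} → ℝ => Qf Y (extFn Y x) (extFn Y x) := by
  show Continuous fun x : {σ : Finset V // σ ∈ Y.K 1} → ℝ =>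
    ∑ τ ∈ Y.K 1, ∑ τ' ∈ (Y.K 1).filter (fun τ' => τ ∪ τ' ∈ Y.K 2),
      Y.m (τ ∪ τ') * (extFn Y x τ * extFn Y x τ')
  exact continuous_finset_sum _ fun τ _ => continuous_finset_sum _ fun τ' _ =>
    continuous_const.mul ((extFn_continuous_apply Y τ).mul (extFn_continuous_apply Y τ'))

lemma core_upper {Y : WSC V} {d : ℕ} (hY : Y.IsWSC d) (hd : 2 ≤ d)
    (hconn : Y.skeleton.Connected) {μ0 : ℝ} (hμ0 : 0 ≤ μ0) (hμ1 : μ0 < 1)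
    (hloc : ∀ u ∈ Y.K 1, ∀ ψ : Finset V → ℝ,
      (∑ v ∈ (Y.link u).K 1, (Y.link u).m v * ψ v) = 0 →
      (Y.link u).inn 1 ((Y.link u).Mup' 1 ψ) ψ ≤ μ0 * (Y.link u).normSq 1 ψ)
    (ψ0 : Finset V → ℝ) (hz : ∑ σ ∈ Y.K 1, Y.m σ * ψ0 σ = 0) :
    (1 - μ0) * (Y.inn 1 (Y.Mup' 1 ψ0) ψ0) ≤ μ0 * Y.normSq 1 ψ0 := by
  classical
  have hd1 : 1 ≤ d := by omega
  have hlocQ : ∀ u ∈ Y.K 1, ∀ ψ : Finset V → ℝ,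
      (∑ v ∈ (Y.link u).K 1, (Y.link u).m v * ψ v) = 0 →
      Qf (Y.link u) ψ ψ ≤ μ0 * (Y.link u).normSq 1 ψ := by
    intro u hu ψ hψ
    rw [← inn_Mup' (link_isWSC hY hu hd1) ψ ψ]
    exact hloc u hu ψ hψ
  rw [inn_Mup' hY ψ0 ψ0]
  by_cases hzero : Y.normSq 1 ψ0 = 0
  · rw [Qf_zero (normSq_eq_zero hY hzero), hzero, mul_zero, mul_zero]
  -- the compact constraint set
  set S : Set ({σ : Finset V // σ ∈ Y.K 1} → ℝ) :=
    {x | Y.normSq 1 (extFn Y x) = 1} ∩ {x | ∑ σ ∈ Y.K 1, Y.m σ * extFn Y x σ = 0} with hSdef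
  have hSclosed : IsClosed S :=
    (isClosed_eq (normSq_extFn_continuous Y) continuous_const).inter
      (isClosed_eq (lin_extFn_continuous Y) continuous_const)
  have hSsub : S ⊆ Set.pi Set.univ (fun i : {σ : Finset V // σ ∈ Y.K 1} =>
      Set.Icc (-(Real.sqrt (1 / Y.m i))) (Real.sqrt (1 / Y.m i))) := by
    rintro x ⟨hx1, hx2⟩ i _
    have him : (i : Finset V) ∈ Y.K 1 := i.2
    have hmi : 0 < Y.m i := m_pos hY him
    have hterm : Y.m i * (extFn Y x i * extFn Y x i) ≤ 1 := by
      rw [← hx1]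
      exact Finset.single_le_sum
        (f := fun σ => Y.m σ * (extFn Y x σ * extFn Y x σ))
        (fun σ hσ => mul_nonneg (m_pos hY hσ).le (mul_self_nonneg _)) him
    have hC : extFn Y x i = x i := by
      show dite _ _ _ = x i
      rw [dif_pos him]
    rw [hC] at hterm
    have habs : |x i| ≤ Real.sqrt (1 / Y.m i) := by
      apply Real.abs_le_sqrt
      rw [le_div_iff₀ hmi]
      nlinarith [hterm]
    rw [Set.mem_Icc]
    exact abs_le.1 habs
  have hScompact : IsCompact S :=
    (isCompact_univ_pi fun i => isCompact_Icc).of_isClosed_subset hSclosed hSsub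
  have hmemS : ∀ ψ : Finset V → ℝ, (∑ σ ∈ Y.K 1, Y.m σ * ψ σ = 0) → Y.normSq 1 ψ ≠ 0 →
      (fun i : {σ : Finset V // σ ∈ Y.K 1} => ψ i / Real.sqrt (Y.normSq 1 ψ)) ∈ S := by
    intro ψ hψz hψne
    have hP : 0 < Y.normSq 1 ψ := normSq_pos hY hψne
    have hs : Real.sqrt (Y.normSq 1 ψ) * Real.sqrt (Y.normSq 1 ψ) = Y.normSq 1 ψ :=
      Real.mul_self_sqrt hP.le
    have hext : ∀ σ ∈ Y.K 1,
        extFn Y (fun i : {σ : Finset V // σ ∈ Y.K 1} => ψ i / Real.sqrt (Y.normSq 1 ψ)) σ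
          = ψ σ / Real.sqrt (Y.normSq 1 ψ) := by
      intro σ hσ
      show dite _ _ _ = _
      rw [dif_pos hσ]
    constructor
    · show Y.normSq 1 _ = 1
      have heq : Y.normSq 1 (extFn Y
            (fun i : {σ : Finset V // σ ∈ Y.K 1} => ψ i / Real.sqrt (Y.normSq 1 ψ)))
          = (∑ σ ∈ Y.K 1, Y.m σ * (ψ σ * ψ σ))
            / (Real.sqrt (Y.normSq 1 ψ) * Real.sqrt (Y.normSq 1 ψ)) := by
        rw [Finset.sum_div]
        refine Finset.sum_congr rfl fun σ hσ => ?_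
        rw [hext σ hσ, div_mul_div_comm, ← mul_div_assoc]
      rw [heq, hs]
      exact div_self hψne
    · show (∑ σ ∈ Y.K 1, Y.m σ * extFn Y _ σ) = 0
      have heq : ∑ σ ∈ Y.K 1, Y.m σ * extFn Y
            (fun i : {σ : Finset V // σ ∈ Y.K 1} => ψ i / Real.sqrt (Y.normSq 1 ψ)) σ
          = (∑ σ ∈ Y.K 1, Y.m σ * ψ σ) / Real.sqrt (Y.normSq 1 ψ) := by
        rw [Finset.sum_div]
        refine Finset.sum_congr rfl fun σ hσ => ?_
        rw [hext σ hσ, ← mul_div_assoc]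
      rw [heq, hψz, zero_div]
  obtain ⟨x, hxS, hxmax⟩ := hScompact.exists_isMaxOn ⟨_, hmemS ψ0 hz hzero⟩
    ((Qf_extFn_continuous Y).continuousOn)
  set φ := extFn Y x with hφdef
  set M := Qf Y φ φ with hMdef
  have hN1 : Y.normSq 1 φ = 1 := hxS.1
  have hzφ : ∑ σ ∈ Y.K 1, Y.m σ * φ σ = 0 := hxS.2
  -- upper bound property of the maximum
  have hub : ∀ ψ : Finset V → ℝ, (∑ σ ∈ Y.K 1, Y.m σ * ψ σ = 0) →
      Qf Y ψ ψ ≤ M * Y.normSq 1 ψ := by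
    intro ψ hψz
    by_cases hq : Y.normSq 1 ψ = 0
    · rw [Qf_zero (normSq_eq_zero hY hq), hq, mul_zero]
    · have hP : 0 < Y.normSq 1 ψ := normSq_pos hY hq
      have hs : Real.sqrt (Y.normSq 1 ψ) * Real.sqrt (Y.normSq 1 ψ) = Y.normSq 1 ψ :=
        Real.mul_self_sqrt hP.le
      have hy := isMaxOn_iff.1 hxmax _ (hmemS ψ hψz hq)
      have hQy : Qf Y (extFn Y (fun i : {σ : Finset V // σ ∈ Y.K 1} =>
              ψ i / Real.sqrt (Y.normSq 1 ψ)))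
            (extFn Y (fun i : {σ : Finset V // σ ∈ Y.K 1} => ψ i / Real.sqrt (Y.normSq 1 ψ)))
          = Qf Y ψ ψ / (Real.sqrt (Y.normSq 1 ψ) * Real.sqrt (Y.normSq 1 ψ)) := by
        unfold Qf
        rw [Finset.sum_div]
        refine Finset.sum_congr rfl fun τ hτ => ?_
        rw [Finset.sum_div]
        refine Finset.sum_congr rfl fun τ' hτ' => ?_
        have hτ'1 : τ' ∈ Y.K 1 := (Finset.mem_filter.1 hτ').1
        have e1 : extFn Y (fun i : {σ : Finset V // σ ∈ Y.K 1} =>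
            ψ i / Real.sqrt (Y.normSq 1 ψ)) τ = ψ τ / Real.sqrt (Y.normSq 1 ψ) := by
          show dite _ _ _ = _
          rw [dif_pos hτ]
        have e2 : extFn Y (fun i : {σ : Finset V // σ ∈ Y.K 1} =>
            ψ i / Real.sqrt (Y.normSq 1 ψ)) τ' = ψ τ' / Real.sqrt (Y.normSq 1 ψ) := by
          show dite _ _ _ = _
          rw [dif_pos hτ'1]
        rw [e1, e2, div_mul_div_comm, ← mul_div_assoc]
      rw [hQy, hs] at hy
      calc Qf Y ψ ψ = (Qf Y ψ ψ / Y.normSq 1 ψ) * Y.normSq 1 ψ := by field_simp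
        _ ≤ M * Y.normSq 1 ψ := mul_le_mul_of_nonneg_right hy hP.le
  -- the maximizer behaves like an eigenfunction: ‖Aφ‖² = M²
  have hAz : ∑ σ ∈ Y.K 1, Y.m σ * Y.Mup' 1 φ σ = 0 := Mup'_orth hY hd1 φ hzφ
  have hQφA : Qf Y φ (Y.Mup' 1 φ) = Y.normSq 1 (Y.Mup' 1 φ) := by
    rw [Qf_symm, ← inn_Mup' hY φ (Y.Mup' 1 φ)]
    rfl
  have hQAφ : Qf Y (Y.Mup' 1 φ) φ = Y.normSq 1 (Y.Mup' 1 φ) :=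
    (Qf_symm Y (Y.Mup' 1 φ) φ).trans hQφA
  have hinnM : Y.inn 1 φ (Y.Mup' 1 φ) = M := by
    rw [inn_comm, inn_Mup' hY φ φ]
  have hquad : ∀ t : ℝ,
      0 ≤ (M * Y.normSq 1 (Y.Mup' 1 φ) - Qf Y (Y.Mup' 1 φ) (Y.Mup' 1 φ)) * t ^ 2
        + (2 * (M ^ 2 - Y.normSq 1 (Y.Mup' 1 φ))) * t := by
    intro t
    have hy := hub (fun σ => φ σ + t * Y.Mup' 1 φ σ)
      (zero_sum_expand Y φ (Y.Mup' 1 φ) t hzφ hAz)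
    rw [Qf_expand Y φ (Y.Mup' 1 φ) t, normSq_expand Y φ (Y.Mup' 1 φ) t, hQφA, hQAφ,
      hinnM, hN1, ← hMdef] at hy
    nlinarith [hy]
  have hqM : Y.normSq 1 (Y.Mup' 1 φ) = M ^ 2 := by
    have hb := quad_coeff_zero hquad
    linarith
  -- localization bound at the maximizer
  have hM_ineq := loc_bound_upper hY hd μ0 φ hlocQ
  rw [hN1, hqM, ← hMdef] at hM_ineq
  -- connectivity gives M < 1
  have hMle : M ≤ 1 := by
    have h := Q_le_normSq hY hd1 φ
    rw [hN1, ← hMdef] at h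
    exact h
  have hMlt : M < 1 := by
    rcases lt_or_eq_of_le hMle with h | h
    · exact h
    · exfalso
      have houter_nonneg : ∀ τ ∈ Y.K 1, 0 ≤ ∑ τ' ∈ (Y.K 1).filter (fun τ' => τ ∪ τ' ∈ Y.K 2),
          Y.m (τ ∪ τ') * (φ τ - φ τ') ^ 2 := by
        intro τ _
        refine Finset.sum_nonneg fun τ' hτ' => ?_
        exact mul_nonneg (m_pos hY ((Finset.mem_filter.1 hτ').2)).le (sq_nonneg _)
      have hzero2 : ∑ τ ∈ Y.K 1, ∑ τ' ∈ (Y.K 1).filter (fun τ' => τ ∪ τ' ∈ Y.K 2),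
          Y.m (τ ∪ τ') * (φ τ - φ τ') ^ 2 = 0 := by
        rw [sq_diff_identity hY hd1 φ, hN1, ← hMdef, ← h]
        ring
      have hadj : ∀ τ ∈ Y.K 1, ∀ τ' ∈ (Y.K 1).filter (fun τ' => τ ∪ τ' ∈ Y.K 2),
          φ τ = φ τ' := by
        intro τ hτ τ' hτ'
        have houter := (Finset.sum_eq_zero_iff_of_nonneg houter_nonneg).1 hzero2 τ hτ
        have hinner := (Finset.sum_eq_zero_iff_of_nonneg (fun τ' hτ' =>
          mul_nonneg (m_pos hY ((Finset.mem_filter.1 hτ').2)).le (sq_nonneg _))).1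
          houter τ' hτ'
        have hm := m_pos hY ((Finset.mem_filter.1 hτ').2)
        have h3 : (φ τ - φ τ') ^ 2 = 0 := by
          rcases mul_eq_zero.1 hinner with hcase | hcase
          · exact absurd hcase (ne_of_gt hm)
          · exact hcase
        have h4 := pow_eq_zero_iff (n := 2) (by norm_num) |>.1 h3
        linarith [h4]
      have hvert : ∀ a b : {v : V // ({v} : Finset V) ∈ Y.faces},
          Y.skeleton.Adj a b → φ {(a : V)} = φ {(b : V)} := by
        intro a b hab
        obtain ⟨hne, hfab⟩ := hab
        have hha : ({(a : V)} : Finset V) ∈ Y.K 1 := mem_K.2 ⟨a.2, Finset.card_singleton _⟩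
        have hhb : ({(b : V)} : Finset V) ∈ Y.K 1 := mem_K.2 ⟨b.2, Finset.card_singleton _⟩
        have hset : ({(a : V)} : Finset V) ∪ {(b : V)} = ({(a : V), (b : V)} : Finset V) :=
          (Finset.insert_eq _ _).symm
        have hcard : (({(a : V)} : Finset V) ∪ {(b : V)}).card = 2 := by
          rw [hset, Finset.card_insert_of_notMem, Finset.card_singleton]
          simp only [Finset.mem_singleton]
          exact fun hh => hne (Subtype.ext hh)
        refine hadj _ hha _ (Finset.mem_filter.2 ⟨hhb, mem_K.2 ⟨?_, hcard⟩⟩)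
        rw [hset]
        exact hfab
      have hwalk : ∀ a b : {v : V // ({v} : Finset V) ∈ Y.faces}, φ {(a : V)} = φ {(b : V)} := by
        intro a b
        obtain ⟨p⟩ := hconn.preconnected a b
        induction p with
        | nil => rfl
        | cons hadjx p ih => exact (hvert _ _ hadjx).trans ih
      obtain ⟨v0⟩ := hconn.nonempty
      have hconst : ∀ σ ∈ Y.K 1, φ σ = φ {(v0 : V)} := by
        intro σ hσ
        obtain ⟨hf, hc⟩ := mem_K.1 hσ
        obtain ⟨v, rfl⟩ := Finset.card_eq_one.1 hc
        exact hwalk ⟨v, hf⟩ v0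
      have hsum0 : ∑ σ ∈ Y.K 1, Y.m σ * φ σ = φ {(v0 : V)} * Y.m ∅ := by
        rw [m_empty_eq hY, Finset.mul_sum]
        exact Finset.sum_congr rfl fun σ hσ => by rw [hconst σ hσ]; ring
      have h00 := hzφ
      rw [hsum0] at h00
      have hm0 : 0 < Y.m ∅ := hY.2.2.2.2.1 hY.1
      have hv00 : φ {(v0 : V)} = 0 := by
        rcases mul_eq_zero.1 h00 with hcase | hcase
        · exact hcase
        · exact absurd hcase (ne_of_gt hm0)
      have hns : Y.normSq 1 φ = 0 :=
        Finset.sum_eq_zero fun σ hσ => by rw [hconst σ hσ, hv00]; ring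
      rw [hN1] at hns
      exact one_ne_zero hns
  -- conclude
  have hMfinal : M * (1 - μ0) ≤ μ0 := by nlinarith [hM_ineq, hMlt]
  have hQψ0 := hub ψ0 hz
  have hNψ0 : 0 ≤ Y.normSq 1 ψ0 := normSq_nonneg hY 1 ψ0
  calc (1 - μ0) * Qf Y ψ0 ψ0 ≤ (1 - μ0) * (M * Y.normSq 1 ψ0) :=
      mul_le_mul_of_nonneg_left hQψ0 (by linarith)
    _ = (M * (1 - μ0)) * Y.normSq 1 ψ0 := by ring
    _ ≤ μ0 * Y.normSq 1 ψ0 := mul_le_mul_of_nonneg_right hMfinal hNψ0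

lemma core_lower {Y : WSC V} {d : ℕ} (hY : Y.IsWSC d) (hd : 2 ≤ d) {ν0 : ℝ} (hν : ν0 ≤ 0)
    (hloc : ∀ u ∈ Y.K 1, ∀ ψ : Finset V → ℝ,
      (∑ v ∈ (Y.link u).K 1, (Y.link u).m v * ψ v) = 0 →
      ν0 * (Y.link u).normSq 1 ψ ≤ (Y.link u).inn 1 ((Y.link u).Mup' 1 ψ) ψ)
    (ψ : Finset V → ℝ) :
    ν0 * Y.normSq 1 ψ ≤ (1 - ν0) * (Y.inn 1 (Y.Mup' 1 ψ) ψ) := by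
  have hd1 : 1 ≤ d := by omega
  have hlocQ : ∀ u ∈ Y.K 1, ∀ θ : Finset V → ℝ,
      (∑ v ∈ (Y.link u).K 1, (Y.link u).m v * θ v) = 0 →
      ν0 * (Y.link u).normSq 1 θ ≤ Qf (Y.link u) θ θ := by
    intro u hu θ hθ
    rw [← inn_Mup' (link_isWSC hY hu hd1) θ θ]
    exact hloc u hu θ hθ
  rw [inn_Mup' hY ψ ψ]
  have hlb := loc_bound_lower hY hd ν0 ψ hlocQ
  have hq0 : 0 ≤ Y.normSq 1 (Y.Mup' 1 ψ) := normSq_nonneg hY 1 _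
  have hP0 : 0 ≤ Y.normSq 1 ψ := normSq_nonneg hY 1 ψ
  have hCS : (Qf Y ψ ψ) ^ 2 ≤ Y.normSq 1 (Y.Mup' 1 ψ) * Y.normSq 1 ψ := by
    have h := inn_sq_le hY (Y.Mup' 1 ψ) ψ
    rw [inn_Mup' hY ψ ψ] at h
    exact h
  have hQP : Qf Y ψ ψ ≤ Y.normSq 1 ψ := Q_le_normSq hY hd1 ψ
  set P := Y.normSq 1 ψ
  set q := Y.normSq 1 (Y.Mup' 1 ψ)
  set Q0 := Qf Y ψ ψ
  rcases eq_or_lt_of_le hQP with he | hlt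
  · have t1 : ν0 * P ≤ 0 := mul_nonpos_of_nonpos_of_nonneg hν hP0
    have t2 : 0 ≤ (1 - ν0) * Q0 := mul_nonneg (by linarith) (by rw [he]; exact hP0)
    linarith
  · have h1 : (q + ν0 * (P - q)) * P ≤ Q0 * P := mul_le_mul_of_nonneg_right hlb hP0
    have h2 : (1 - ν0) * Q0 ^ 2 ≤ (1 - ν0) * (q * P) := mul_le_mul_of_nonneg_left hCS (by linarith)
    have hkey : 0 ≤ (P - Q0) * ((1 - ν0) * Q0 - ν0 * P) := by nlinarith [h1, h2]
    by_contra hcon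
    push_neg at hcon
    have hneg : (P - Q0) * ((1 - ν0) * Q0 - ν0 * P) < 0 :=
      mul_neg_of_pos_of_neg (by linarith) (by linarith)
    linarith

end WSC

namespace WSC

variable {V : Type*} [DecidableEq V]

lemma rayleigh_le {Z : WSC V} {e : ℕ} (hZ : Z.IsWSC e) (he : 1 ≤ e) {ψ : Finset V → ℝ}
    (h : Z.normSq 1 ψ ≠ 0) : Z.inn 1 (Z.Mup' 1 ψ) ψ / Z.normSq 1 ψ ≤ 1 := by
  rw [div_le_one (normSq_pos hZ h), inn_Mup' hZ ψ ψ]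
  exact Q_le_normSq hZ he ψ

lemma rayleigh_ge {Z : WSC V} {e : ℕ} (hZ : Z.IsWSC e) (he : 1 ≤ e) {ψ : Finset V → ℝ}
    (h : Z.normSq 1 ψ ≠ 0) : -1 ≤ Z.inn 1 (Z.Mup' 1 ψ) ψ / Z.normSq 1 ψ := by
  rw [le_div_iff₀ (normSq_pos hZ h), inn_Mup' hZ ψ ψ]
  have := neg_normSq_le_Q hZ he ψ
  linarith

lemma secondEig_le_one {Z : WSC V} {e : ℕ} (hZ : Z.IsWSC e) (he : 1 ≤ e) :
    Z.secondEig ≤ 1 := by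
  refine Real.sSup_le ?_ zero_le_one
  rintro r ⟨ψ, hne, hz, rfl⟩
  exact rayleigh_le hZ he hne

lemma smallestEig_ge {Z : WSC V} {e : ℕ} (hZ : Z.IsWSC e) (he : 1 ≤ e) :
    -1 ≤ Z.smallestEig := by
  unfold smallestEig
  rcases Set.eq_empty_or_nonempty {r : ℝ | ∃ ψ : Finset V → ℝ, Z.normSq 1 ψ ≠ 0 ∧
      r = Z.inn 1 (Z.Mup' 1 ψ) ψ / Z.normSq 1 ψ} with hS | hS
  · rw [hS, Real.sInf_empty]; norm_num
  · refine le_csInf hS ?_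
    rintro r ⟨ψ, hne, rfl⟩
    exact rayleigh_ge hZ he hne

lemma smallestEig_bddBelow {Z : WSC V} {e : ℕ} (hZ : Z.IsWSC e) (he : 1 ≤ e) :
    BddBelow {r : ℝ | ∃ ψ : Finset V → ℝ, Z.normSq 1 ψ ≠ 0 ∧
      r = Z.inn 1 (Z.Mup' 1 ψ) ψ / Z.normSq 1 ψ} := by
  refine ⟨-1, ?_⟩
  rintro r ⟨ψ, hne, rfl⟩
  exact rayleigh_ge hZ he hne

/-- The descent step for `μ`. -/
lemma descent_mu (X : WSC V) (n : ℕ) (hX : X.IsWSC n) (hconn : X.LinksConnected n)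
    {lam : ℝ} (h0 : 0 < lam) {k : ℕ} (hk : k + 2 ≤ n)
    (Hμ : X.mu (k + 1) ≤ lam / (1 + ((k + 1 : ℕ) : ℝ) * lam)) :
    X.mu k ≤ lam / (1 + (k : ℝ) * lam) := by
  have hden1 : (0:ℝ) < 1 + (k : ℝ) * lam := by
    have := mul_nonneg (Nat.cast_nonneg (α := ℝ) k) h0.le
    linarith
  have hden2 : (0:ℝ) < 1 + ((k + 1 : ℕ) : ℝ) * lam := by
    have := mul_nonneg (Nat.cast_nonneg (α := ℝ) (k + 1)) h0.le
    linarith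
  set μ0 := lam / (1 + ((k + 1 : ℕ) : ℝ) * lam) with hμ0def
  have hμ0pos : 0 < μ0 := div_pos h0 hden2
  have hμ0lt : μ0 < 1 := by
    rw [hμ0def, div_lt_one hden2]
    push_cast
    nlinarith [mul_nonneg (Nat.cast_nonneg (α := ℝ) k) h0.le]
  refine Real.sSup_le ?_ (div_nonneg h0.le hden1.le)
  rintro r ⟨τ, hτ, rfl⟩
  have hY : (X.link τ).IsWSC (n - k) := link_isWSC hX hτ (by omega)
  have hd : 2 ≤ n - k := by omega
  have hcon : (X.link τ).skeleton.Connected := hconn k (by omega) τ hτ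
  have hτk : τ.card = k := (mem_K.1 hτ).2
  -- localization hypothesis from level k+1
  have hloc : ∀ u ∈ (X.link τ).K 1, ∀ ψ : Finset V → ℝ,
      (∑ v ∈ ((X.link τ).link u).K 1, ((X.link τ).link u).m v * ψ v) = 0 →
      ((X.link τ).link u).inn 1 (((X.link τ).link u).Mup' 1 ψ) ψ
        ≤ μ0 * ((X.link τ).link u).normSq 1 ψ := by
    intro u hu ψ hψ
    have huf : u ∈ (X.link τ).faces := (mem_K.1 hu).1
    have hLL : (X.link τ).link u = X.link (τ ∪ u) := link_link hX huf
    rw [hLL] at hψ ⊢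
    obtain ⟨hufX, hucap, hcupX⟩ := mem_link_faces.1 huf
    have hucard : u.card = 1 := (mem_K.1 hu).2
    have hσ : τ ∪ u ∈ X.K (k + 1) := by
      refine mem_K.2 ⟨hcupX, ?_⟩
      rw [Finset.card_union_of_disjoint]
      · omega
      · rw [Finset.disjoint_iff_inter_eq_empty, Finset.inter_comm]
        exact hucap
    have hZ : (X.link (τ ∪ u)).IsWSC (n - (k + 1)) := link_isWSC hX hσ (by omega)
    have he1 : 1 ≤ n - (k + 1) := by omega
    by_cases hzero : (X.link (τ ∪ u)).normSq 1 ψ = 0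
    · rw [inn_zero_right (normSq_eq_zero hZ hzero), hzero, mul_zero]
    · have hppos := normSq_pos hZ hzero
      have hmem : (X.link (τ ∪ u)).inn 1 ((X.link (τ ∪ u)).Mup' 1 ψ) ψ
            / (X.link (τ ∪ u)).normSq 1 ψ
          ∈ {r : ℝ | ∃ ψ' : Finset V → ℝ, (X.link (τ ∪ u)).normSq 1 ψ' ≠ 0 ∧
            (∑ v ∈ (X.link (τ ∪ u)).K 1, (X.link (τ ∪ u)).m v * ψ' v) = 0 ∧
            r = (X.link (τ ∪ u)).inn 1 ((X.link (τ ∪ u)).Mup' 1 ψ') ψ'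
              / (X.link (τ ∪ u)).normSq 1 ψ'} := ⟨ψ, hzero, hψ, rfl⟩
      have hbdd1 : BddAbove {r : ℝ | ∃ ψ' : Finset V → ℝ,
          (X.link (τ ∪ u)).normSq 1 ψ' ≠ 0 ∧
          (∑ v ∈ (X.link (τ ∪ u)).K 1, (X.link (τ ∪ u)).m v * ψ' v) = 0 ∧
          r = (X.link (τ ∪ u)).inn 1 ((X.link (τ ∪ u)).Mup' 1 ψ') ψ'
            / (X.link (τ ∪ u)).normSq 1 ψ'} := by
        refine ⟨1, ?_⟩
        rintro r ⟨ψ', hne', hz', rfl⟩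
        exact rayleigh_le hZ he1 hne'
      have hr1 : (X.link (τ ∪ u)).inn 1 ((X.link (τ ∪ u)).Mup' 1 ψ) ψ
            / (X.link (τ ∪ u)).normSq 1 ψ ≤ (X.link (τ ∪ u)).secondEig :=
        le_csSup hbdd1 hmem
      have hbdd2 : BddAbove {r : ℝ | ∃ σ ∈ X.K (k + 1), r = (X.link σ).secondEig} := by
        refine ⟨1, ?_⟩
        rintro r ⟨σ, hσ', rfl⟩
        exact secondEig_le_one (link_isWSC hX hσ' (by omega)) (by omega)
      have hr2 : (X.link (τ ∪ u)).secondEig ≤ X.mu (k + 1) :=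
        le_csSup hbdd2 ⟨τ ∪ u, hσ, rfl⟩
      have hr3 : (X.link (τ ∪ u)).inn 1 ((X.link (τ ∪ u)).Mup' 1 ψ) ψ
          / (X.link (τ ∪ u)).normSq 1 ψ ≤ μ0 := le_trans hr1 (le_trans hr2 Hμ)
      calc (X.link (τ ∪ u)).inn 1 ((X.link (τ ∪ u)).Mup' 1 ψ) ψ
          = ((X.link (τ ∪ u)).inn 1 ((X.link (τ ∪ u)).Mup' 1 ψ) ψ
              / (X.link (τ ∪ u)).normSq 1 ψ) * (X.link (τ ∪ u)).normSq 1 ψ := by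
            field_simp
        _ ≤ μ0 * (X.link (τ ∪ u)).normSq 1 ψ :=
            mul_le_mul_of_nonneg_right hr3 hppos.le
  have hcore := core_upper hY hd hcon hμ0pos.le hμ0lt hloc
  refine Real.sSup_le ?_ (div_nonneg h0.le hden1.le)
  rintro r ⟨ψ, hne, hz, rfl⟩
  have hc := hcore ψ hz
  have hppos := normSq_pos hY hne
  rw [div_le_iff₀ hppos]
  have hkey : (1 - μ0) * (lam / (1 + (k : ℝ) * lam)) = μ0 := by
    rw [hμ0def]
    field_simp
    push_cast
    ring
  have h3 : (1 - μ0) * ((X.link τ).inn 1 ((X.link τ).Mup' 1 ψ) ψ)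
      ≤ (1 - μ0) * (lam / (1 + (k : ℝ) * lam) * (X.link τ).normSq 1 ψ) := by
    rw [show (1 - μ0) * (lam / (1 + (k : ℝ) * lam) * (X.link τ).normSq 1 ψ)
        = ((1 - μ0) * (lam / (1 + (k : ℝ) * lam))) * (X.link τ).normSq 1 ψ from by ring,
      hkey]
    exact hc
  exact le_of_mul_le_mul_left h3 (by linarith)

/-- The descent step for `ν`. -/
lemma descent_nu (X : WSC V) (n : ℕ) (hX : X.IsWSC n) {lam : ℝ} (h0 : 0 < lam) {k : ℕ}
    (hk : k + 2 ≤ n)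
    (Hν : -(lam / (1 + ((k + 1 : ℕ) : ℝ) * lam)) ≤ X.nu (k + 1)) :
    -(lam / (1 + (k : ℝ) * lam)) ≤ X.nu k := by
  have hden1 : (0:ℝ) < 1 + (k : ℝ) * lam := by
    have := mul_nonneg (Nat.cast_nonneg (α := ℝ) k) h0.le
    linarith
  have hden2 : (0:ℝ) < 1 + ((k + 1 : ℕ) : ℝ) * lam := by
    have := mul_nonneg (Nat.cast_nonneg (α := ℝ) (k + 1)) h0.le
    linarith
  set f1 := lam / (1 + ((k + 1 : ℕ) : ℝ) * lam) with hf1def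
  set f0 := lam / (1 + (k : ℝ) * lam) with hf0def
  have hf1pos : 0 < f1 := div_pos h0 hden2
  have hf0pos : 0 < f0 := div_pos h0 hden1
  have hkey : (1 - f1) * f0 = f1 := by
    rw [hf1def, hf0def]
    field_simp
    push_cast
    ring
  unfold nu
  rcases Set.eq_empty_or_nonempty {r : ℝ | ∃ τ ∈ X.K k, r = (X.link τ).smallestEig}
    with hS | hS
  · rw [hS, Real.sInf_empty]; linarith
  refine le_csInf hS ?_
  rintro r ⟨τ, hτ, rfl⟩
  have hY : (X.link τ).IsWSC (n - k) := link_isWSC hX hτ (by omega)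
  have hd : 2 ≤ n - k := by omega
  have hτk : τ.card = k := (mem_K.1 hτ).2
  have hloc : ∀ u ∈ (X.link τ).K 1, ∀ ψ : Finset V → ℝ,
      (∑ v ∈ ((X.link τ).link u).K 1, ((X.link τ).link u).m v * ψ v) = 0 →
      (-f1) * ((X.link τ).link u).normSq 1 ψ
        ≤ ((X.link τ).link u).inn 1 (((X.link τ).link u).Mup' 1 ψ) ψ := by
    intro u hu ψ _
    have huf : u ∈ (X.link τ).faces := (mem_K.1 hu).1
    have hLL : (X.link τ).link u = X.link (τ ∪ u) := link_link hX huf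
    rw [hLL]
    obtain ⟨hufX, hucap, hcupX⟩ := mem_link_faces.1 huf
    have hucard : u.card = 1 := (mem_K.1 hu).2
    have hσ : τ ∪ u ∈ X.K (k + 1) := by
      refine mem_K.2 ⟨hcupX, ?_⟩
      rw [Finset.card_union_of_disjoint]
      · omega
      · rw [Finset.disjoint_iff_inter_eq_empty, Finset.inter_comm]
        exact hucap
    have hZ : (X.link (τ ∪ u)).IsWSC (n - (k + 1)) := link_isWSC hX hσ (by omega)
    have he1 : 1 ≤ n - (k + 1) := by omega
    by_cases hzero : (X.link (τ ∪ u)).normSq 1 ψ = 0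
    · rw [inn_zero_right (normSq_eq_zero hZ hzero), hzero, mul_zero]
    · have hppos := normSq_pos hZ hzero
      have hr1 : (X.link (τ ∪ u)).smallestEig
          ≤ (X.link (τ ∪ u)).inn 1 ((X.link (τ ∪ u)).Mup' 1 ψ) ψ
            / (X.link (τ ∪ u)).normSq 1 ψ :=
        csInf_le (smallestEig_bddBelow hZ he1) ⟨ψ, hzero, rfl⟩
      have hbdd2 : BddBelow {r : ℝ | ∃ σ ∈ X.K (k + 1), r = (X.link σ).smallestEig} := by
        refine ⟨-1, ?_⟩
        rintro r ⟨σ, hσ', rfl⟩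
        exact smallestEig_ge (link_isWSC hX hσ' (by omega)) (by omega)
      have hr2 : X.nu (k + 1) ≤ (X.link (τ ∪ u)).smallestEig :=
        csInf_le hbdd2 ⟨τ ∪ u, hσ, rfl⟩
      have hr3 : -f1 ≤ (X.link (τ ∪ u)).inn 1 ((X.link (τ ∪ u)).Mup' 1 ψ) ψ
          / (X.link (τ ∪ u)).normSq 1 ψ := le_trans Hν (le_trans hr2 hr1)
      rw [le_div_iff₀ hppos] at hr3
      linarith [hr3]
  have hcore := core_lower hY hd (by linarith : -f1 ≤ (0:ℝ)) hloc
  unfold smallestEig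
  rcases Set.eq_empty_or_nonempty {r : ℝ | ∃ ψ : Finset V → ℝ,
      (X.link τ).normSq 1 ψ ≠ 0 ∧
      r = (X.link τ).inn 1 ((X.link τ).Mup' 1 ψ) ψ / (X.link τ).normSq 1 ψ}
    with hS2 | hS2
  · rw [hS2, Real.sInf_empty]; linarith
  refine le_csInf hS2 ?_
  rintro r ⟨ψ, hne, rfl⟩
  have hc := hcore ψ
  have hppos := normSq_pos hY hne
  rw [le_div_iff₀ hppos]
  -- goal : -f0 * normSq ≤ inn
  have hg : -f0 * (1 + f1) ≤ -f1 := by nlinarith [hkey, hf0pos.le, hf1pos.le]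
  have h4 : (-f0 * (1 + f1)) * (X.link τ).normSq 1 ψ ≤ (-f1) * (X.link τ).normSq 1 ψ :=
    mul_le_mul_of_nonneg_right hg hppos.le
  have h5 : (-f1) * (X.link τ).normSq 1 ψ
      ≤ (1 - -f1) * ((X.link τ).inn 1 ((X.link τ).Mup' 1 ψ) ψ) := hc
  have h6 : (1 + f1) * (-f0 * (X.link τ).normSq 1 ψ)
      ≤ (1 + f1) * ((X.link τ).inn 1 ((X.link τ).Mup' 1 ψ) ψ) := by
    nlinarith [h4, h5]
  exact le_of_mul_le_mul_left h6 (by linarith)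

end WSC

open WSC
/-- Suppose all links of `X` of dimension `≥ 1` (including `X` itself)
are connected, and let `0 < λ ≤ 1`. If `μ_{n-1} ≤ λ/(1+(n-1)λ)` then `X` is a one-sided
`λ`-local spectral expander; if moreover `-λ/(1+(n-1)λ) ≤ ν_{n-1}` then `X` is a
two-sided `λ`-local spectral expander. -/
theorem expander_from_top_links {V : Type*} [DecidableEq V] (X : WSC V) (n : ℕ)
    (hX : X.IsWSC n) (hconn : X.LinksConnected n) (lam : ℝ) (h0 : 0 < lam)
    (h1 : lam ≤ 1) :
    (X.mu (n - 1) ≤ lam / (1 + ((n - 1 : ℕ) : ℝ) * lam) → X.OneSided n lam) ∧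
    (X.mu (n - 1) ≤ lam / (1 + ((n - 1 : ℕ) : ℝ) * lam) →
      -(lam / (1 + ((n - 1 : ℕ) : ℝ) * lam)) ≤ X.nu (n - 1) → X.TwoSided n lam) := by
  have hden : ∀ k : ℕ, (0:ℝ) < 1 + (k : ℝ) * lam := by
    intro k
    have := mul_nonneg (Nat.cast_nonneg (α := ℝ) k) h0.le
    linarith
  have hfle : ∀ k : ℕ, lam / (1 + (k : ℝ) * lam) ≤ lam := by
    intro k
    rw [div_le_iff₀ (hden k)]
    nlinarith [mul_nonneg (Nat.cast_nonneg (α := ℝ) k) h0.le]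
  have keymu : X.mu (n - 1) ≤ lam / (1 + ((n - 1 : ℕ) : ℝ) * lam) →
      ∀ j : ℕ, ∀ k : ℕ, k < n → n - k ≤ j + 1 → X.mu k ≤ lam / (1 + (k : ℝ) * lam) := by
    intro hmu j
    induction j with
    | zero =>
      intro k hk hle
      have hkn : k = n - 1 := by omega
      subst hkn
      exact hmu
    | succ j ih =>
      intro k hk hle
      by_cases hc : n - k ≤ j + 1
      · exact ih k hk hc
      · have hk2 : k + 2 ≤ n := by omega
        exact descent_mu X n hX hconn h0 hk2 (ih (k + 1) (by omega) (by omega))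
  have keynu : -(lam / (1 + ((n - 1 : ℕ) : ℝ) * lam)) ≤ X.nu (n - 1) →
      ∀ j : ℕ, ∀ k : ℕ, k < n → n - k ≤ j + 1 →
        -(lam / (1 + (k : ℝ) * lam)) ≤ X.nu k := by
    intro hnu j
    induction j with
    | zero =>
      intro k hk hle
      have hkn : k = n - 1 := by omega
      subst hkn
      exact hnu
    | succ j ih =>
      intro k hk hle
      by_cases hc : n - k ≤ j + 1
      · exact ih k hk hc
      · have hk2 : k + 2 ≤ n := by omega
        exact descent_nu X n hX h0 hk2 (ih (k + 1) (by omega) (by omega))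
  constructor
  · intro hmu k hk
    exact le_trans (keymu hmu n k hk (by omega)) (hfle k)
  · intro hmu hnu k hk
    refine ⟨le_trans (keymu hmu n k hk (by omega)) (hfle k), ?_⟩
    have := keynu hnu n k hk (by omega)
    have h2 := hfle k
    linarith
end
end
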